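/- arXiv:2211.02515 — 3 statements merged into one kernel-verified Lean document; each statement's English description precedes it below -/
import Mathlib

section
/- There is a positive absolute constant C such that the number of characters ψ ∈ Ψ for which the inequality |X₁(D^{80},ψ)| + |X₂(D^{80},ψ)| + ∫₁^{D^{80}} (|X₁(x,ψ)| + |X₂(x,ψ)|)·x^{-1} dx < 𝓛^{1171} FAILS is at most C·𝒫·𝓛^{-740}. -/
open scoped Classical

noncomputable section

/-- The Dirichlet L-function of `χ` (extended to modulus `0` by `0`, a case never used below). -/
def Lfun {N : ℕ} (χ : DirichletCharacter ℂ N) (s : ℂ) : ℂ :=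
  if h : N = 0 then 0
  else
    haveI : NeZero N := ⟨h⟩
    DirichletCharacter.LFunction χ s

/-- A Dirichlet character is *real* if all of its values are real numbers. -/
def IsRealChar {N : ℕ} (χ : DirichletCharacter ℂ N) : Prop :=
  ∀ a : ZMod N, (χ a).im = 0

/-- `𝓛 = log D`. -/
def bigL (D : ℕ) : ℝ := Real.log D

/-- `P = exp (𝓛 ^ 9)`. -/
def bigP (D : ℕ) : ℝ := Real.exp (bigL D ^ 9)

/-- Assumption (A): `L(1, χ) < 𝓛 ^ (-2022)`. -/
def AssumptionA (D : ℕ) (χ : DirichletCharacter ℂ D) : Prop :=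
  (Lfun χ 1).re < bigL D ^ (-2022 : ℤ)

/-- `p ~ P`, i.e. `p` is a prime with `P < p < P * (1 + 𝓛 ^ (-68))`. -/
def SimP (D p : ℕ) : Prop :=
  p.Prime ∧ bigP D < (p : ℝ) ∧ (p : ℝ) < bigP D * (1 + bigL D ^ (-68 : ℤ))

/-- The finite set of primes `p ~ P`. -/
def primesP (D : ℕ) : Finset ℕ :=
  (Finset.range ⌈2 * bigP D⌉₊).filter (SimP D)

/-- `𝒫 = ∑_{p ~ P} p`. -/
def calP (D : ℕ) : ℝ := ∑ p ∈ primesP D, (p : ℝ)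

/-- `ν(n) = ∑_{d ∣ n} χ(d)`. -/
def nuF (D : ℕ) (χ : DirichletCharacter ℂ D) (n : ℕ) : ℂ :=
  ∑ d ∈ n.divisors, χ (d : ZMod D)

/-- `υ(n) = ∑_{ab = n} μ(a) μ(b) χ(b)`. -/
def upsF (D : ℕ) (χ : DirichletCharacter ℂ D) (n : ℕ) : ℂ :=
  ∑ d ∈ n.divisors,
    ((ArithmeticFunction.moebius (n / d) : ℤ) : ℂ) * ((ArithmeticFunction.moebius d : ℤ) : ℂ) *
      χ (d : ZMod D)

/-- `t₀ = 𝓛 ^ 519`. -/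
def t0 (D : ℕ) : ℝ := bigL D ^ 519

/-- `s₀ = 1/2 + 2 π i t₀`. -/
def s0 (D : ℕ) : ℂ := 1 / 2 + 2 * (Real.pi : ℂ) * Complex.I * (t0 D : ℂ)

/-- `𝓛₁ = 𝓛 ^ 405`. -/
def bigL1 (D : ℕ) : ℝ := bigL D ^ 405

/-- `ν` truncated to `n ≤ D ^ 4`, as an arithmetic function. -/
def nuT (D : ℕ) (χ : DirichletCharacter ℂ D) : ArithmeticFunction ℂ :=
  ⟨fun n => if n = 0 then 0 else if n ≤ D ^ 4 then nuF D χ n else 0, by simp⟩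

/-- `υ` truncated to `n ≤ D ^ 4`, as an arithmetic function. -/
def upsT (D : ℕ) (χ : DirichletCharacter ℂ D) : ArithmeticFunction ℂ :=
  ⟨fun n => if n = 0 then 0 else if n ≤ D ^ 4 then upsF D χ n else 0, by simp⟩

/-- `ν₂₀`, the 20-fold Dirichlet convolution of the truncation of `ν`. -/
def nu20 (D : ℕ) (χ : DirichletCharacter ℂ D) (n : ℕ) : ℂ := (nuT D χ ^ 20) n

/-- `υ₂₀`, the 20-fold Dirichlet convolution of the truncation of `υ`. -/
def ups20 (D : ℕ) (χ : DirichletCharacter ℂ D) (n : ℕ) : ℂ := (upsT D χ ^ 20) n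

/-- `ς(n) = ∑_{lm = n, l ≤ D⁴, m ≤ D⁴} ν(l) υ(m)`. -/
def sigF (D : ℕ) (χ : DirichletCharacter ℂ D) (n : ℕ) : ℂ :=
  ∑ d ∈ n.divisors,
    if d ≤ D ^ 4 ∧ n / d ≤ D ^ 4 then nuF D χ d * upsF D χ (n / d) else 0

/-- `X₁(x, ψ) = ∑_{n ≤ x} ν₂₀(n) ψ(n) n^{-s₀}`. -/
def X1 (D : ℕ) (χ : DirichletCharacter ℂ D) {p : ℕ} (ψ : DirichletCharacter ℂ p) (x : ℝ) : ℂ :=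
  ∑ n ∈ Finset.Icc 1 ⌊x⌋₊, nu20 D χ n * ψ (n : ZMod p) * (n : ℂ) ^ (-s0 D)

/-- `X₂(x, ψ) = ∑_{n ≤ x} υ₂₀(n) ψ(n) n^{-s₀}`. -/
def X2 (D : ℕ) (χ : DirichletCharacter ℂ D) {p : ℕ} (ψ : DirichletCharacter ℂ p) (x : ℝ) : ℂ :=
  ∑ n ∈ Finset.Icc 1 ⌊x⌋₊, ups20 D χ n * ψ (n : ZMod p) * (n : ℂ) ^ (-s0 D)

/-- `X₃(x, ψ) = ∑_{D⁴ < n ≤ x} ν(n) ψ(n) n^{-s₀}`. -/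
def X3 (D : ℕ) (χ : DirichletCharacter ℂ D) {p : ℕ} (ψ : DirichletCharacter ℂ p) (x : ℝ) : ℂ :=
  ∑ n ∈ Finset.Ioc (D ^ 4) ⌊x⌋₊, nuF D χ n * ψ (n : ZMod p) * (n : ℂ) ^ (-s0 D)

/-- `X₄(x, ψ) = ∑_{D⁴ < n ≤ x} ς(n) ψ(n) n^{-s₀}`. -/
def X4 (D : ℕ) (χ : DirichletCharacter ℂ D) {p : ℕ} (ψ : DirichletCharacter ℂ p) (x : ℝ) : ℂ :=
  ∑ n ∈ Finset.Ioc (D ^ 4) ⌊x⌋₊, sigF D χ n * ψ (n : ZMod p) * (n : ℂ) ^ (-s0 D)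

/-- Inequality (3.4). -/
def Ineq1 (D : ℕ) (χ : DirichletCharacter ℂ D) {p : ℕ} (ψ : DirichletCharacter ℂ p) : Prop :=
  ‖X1 D χ ψ ((D : ℝ) ^ 80)‖ + ‖X2 D χ ψ ((D : ℝ) ^ 80)‖ +
      (∫ x in (1 : ℝ)..((D : ℝ) ^ 80), (‖X1 D χ ψ x‖ + ‖X2 D χ ψ x‖) / x) <
    bigL D ^ 1171

/-- Inequality (3.5). -/
def Ineq2 (D : ℕ) (χ : DirichletCharacter ℂ D) {p : ℕ} (ψ : DirichletCharacter ℂ p) : Prop :=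
  ‖X3 D χ ψ (bigP D ^ 2)‖ + (∫ x in ((D : ℝ) ^ 4)..(bigP D ^ 2), ‖X3 D χ ψ x‖ / x) <
    bigL D ^ (-585 : ℤ)

/-- Inequality (3.6). -/
def Ineq3 (D : ℕ) (χ : DirichletCharacter ℂ D) {p : ℕ} (ψ : DirichletCharacter ℂ p) : Prop :=
  ‖X4 D χ ψ ((D : ℝ) ^ 8)‖ + (∫ x in ((D : ℝ) ^ 4)..((D : ℝ) ^ 8), ‖X4 D χ ψ x‖ / x) <
    bigL D ^ (-633 : ℤ)

/-- Membership in `Ψ₁`: `ψ` is a primitive character mod `p` with `p ~ P` satisfying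
(3.4), (3.5) and (3.6). -/
def MemPsi1 (D : ℕ) (χ : DirichletCharacter ℂ D) {p : ℕ} (ψ : DirichletCharacter ℂ p) : Prop :=
  SimP D p ∧ ψ.IsPrimitive ∧ Ineq1 D χ ψ ∧ Ineq2 D χ ψ ∧ Ineq3 D χ ψ

/-- `F(s, ψ) = ∑_{n ≤ D⁴} ν(n) ψ(n) n^{-s}`. -/
def Ffun (D : ℕ) (χ : DirichletCharacter ℂ D) {p : ℕ} (ψ : DirichletCharacter ℂ p) (s : ℂ) : ℂ :=
  ∑ n ∈ Finset.Icc 1 (D ^ 4), nuF D χ n * ψ (n : ZMod p) * (n : ℂ) ^ (-s)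

/-- `G(s, ψ) = ∑_{n ≤ D⁴} υ(n) ψ(n) n^{-s}`. -/
def Gfun (D : ℕ) (χ : DirichletCharacter ℂ D) {p : ℕ} (ψ : DirichletCharacter ℂ p) (s : ℂ) : ℂ :=
  ∑ n ∈ Finset.Icc 1 (D ^ 4), upsF D χ n * ψ (n : ZMod p) * (n : ℂ) ^ (-s)

/-- `F'(s, ψ) = -∑_{n ≤ D⁴} ν(n) ψ(n) (log n) n^{-s}`, the derivative of `F` in `s`. -/
def Ffun' (D : ℕ) (χ : DirichletCharacter ℂ D) {p : ℕ} (ψ : DirichletCharacter ℂ p) (s : ℂ) : ℂ :=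
  -∑ n ∈ Finset.Icc 1 (D ^ 4),
    nuF D χ n * ψ (n : ZMod p) * ((Real.log n : ℝ) : ℂ) * (n : ℂ) ^ (-s)

/-- `F(1 - s, ψ̄) = ∑_{n ≤ D⁴} ν(n) conj(ψ(n)) n^{s - 1}`, as a function of `s`. -/
def FfunBar (D : ℕ) (χ : DirichletCharacter ℂ D) {p : ℕ} (ψ : DirichletCharacter ℂ p)
    (s : ℂ) : ℂ :=
  ∑ n ∈ Finset.Icc 1 (D ^ 4),
    nuF D χ n * (starRingEnd ℂ) (ψ (n : ZMod p)) * (n : ℂ) ^ (s - 1)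

/-- The region `Ω`. -/
def InOmega (D : ℕ) (s : ℂ) : Prop :=
  |(s - s0 D).re| < 1 / 2 ∧ |(s - s0 D).im| < bigL1 D + 2

/-- The region `Ω₁`. -/
def InOmega1 (D : ℕ) (s : ℂ) : Prop :=
  1 / 2 - Real.log (bigL D) / (100 * bigL D) < s.re ∧
    s.re < 1 + Real.log (bigL D) / (100 * bigL D) ∧
    |s.im - 2 * Real.pi * t0 D| < bigL1 D + 5

/-- The region `Ω₂`. -/
def InOmega2 (D : ℕ) (s : ℂ) : Prop :=
  1 / 2 - (bigL D)⁻¹ < s.re ∧ s.re < 1 + (bigL D)⁻¹ ∧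
    |s.im - 2 * Real.pi * t0 D| < bigL1 D + 4

/-- `α = π / log P`. -/
def alphaD (D : ℕ) : ℝ := Real.pi / Real.log (bigP D)

/-- The region `Ω₃`. -/
def InOmega3 (D : ℕ) (s : ℂ) : Prop :=
  1 / 2 - alphaD D < s.re ∧ s.re < 1 + alphaD D ∧
    |s.im - 2 * Real.pi * t0 D| < bigL1 D + 3

/-- The Gauss sum `τ(θ) = ∑_{a mod k} θ(a) e(a/k)`. -/
def tauSum {k : ℕ} (θ : DirichletCharacter ℂ k) : ℂ :=
  ∑ a ∈ Finset.range k,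
    θ (a : ZMod k) * Complex.exp (2 * (Real.pi : ℂ) * Complex.I * (a : ℂ) / (k : ℂ))

/-- The factor `Z(s, θ)` from the functional equation. -/
def Zfun {k : ℕ} (θ : DirichletCharacter ℂ k) (s : ℂ) : ℂ :=
  if θ (-1) = 1 then
    tauSum θ * (Real.pi : ℂ) ^ (s - 1 / 2) * (k : ℂ) ^ (-s) *
      Complex.Gamma ((1 - s) / 2) / Complex.Gamma (s / 2)
  else
    -Complex.I * tauSum θ * (Real.pi : ℂ) ^ (s - 1 / 2) * (k : ℂ) ^ (-s) *
      Complex.Gamma ((2 - s) / 2) / Complex.Gamma ((1 + s) / 2)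

/-- The product character `χψ` modulo `D * p`, i.e. `n ↦ χ(n) ψ(n)`. -/
def chiPsi (D : ℕ) (χ : DirichletCharacter ℂ D) {p : ℕ} (ψ : DirichletCharacter ℂ p) :
    DirichletCharacter ℂ (D * p) :=
  DirichletCharacter.changeLevel (dvd_mul_right D p) χ *
    DirichletCharacter.changeLevel (dvd_mul_left p D) ψ

/-- `Z̃(s, ψ) = Z(s, ψ) Z(s, χψ)`. -/
def Ztilde (D : ℕ) (χ : DirichletCharacter ℂ D) {p : ℕ} (ψ : DirichletCharacter ℂ p)
    (s : ℂ) : ℂ :=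
  Zfun ψ s * Zfun (chiPsi D χ ψ) s

/-- `T = exp (𝓛 ^ 1.1)`. -/
def bigT (D : ℕ) : ℝ := Real.exp (bigL D ^ (1.1 : ℝ))

/-- `P₄ = P T⁻² t₀`. -/
def P4 (D : ℕ) : ℝ := bigP D * bigT D ^ (-2 : ℤ) * t0 D

/-- The smooth weight `g(x) = π^{-1/2} ∫_{-∞}^{𝓛^{15} log x} e^{-u²} du`. -/
def gfun (D : ℕ) (x : ℝ) : ℝ :=
  Real.pi ^ (-(1 : ℝ) / 2) * ∫ u in Set.Iio (bigL D ^ 15 * Real.log x), Real.exp (-u ^ 2)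

/-- `g*(y) = g(y)` for `y > 1/2`, and `0` otherwise. -/
def gstar (D : ℕ) (y : ℝ) : ℝ := if 1 / 2 < y then gfun D y else 0

/-- `K(s, ψ) = ∑_n ψ(n) n^{-s} g*(P₄ / n)`. -/
def Kfun (D : ℕ) {p : ℕ} (ψ : DirichletCharacter ℂ p) (s : ℂ) : ℂ :=
  ∑' n : ℕ, ψ (n : ZMod p) * (n : ℂ) ^ (-s) * ((gstar D (P4 D / n) : ℝ) : ℂ)

/-- `N(1 - s, ψ̄) = ∑_n conj(ψ(n)) n^{s-1} g*(T² / n)`, as a function of `s`. -/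
def Nfun (D : ℕ) {p : ℕ} (ψ : DirichletCharacter ℂ p) (s : ℂ) : ℂ :=
  ∑' n : ℕ,
    (starRingEnd ℂ) (ψ (n : ZMod p)) * (n : ℂ) ^ (s - 1) * ((gstar D (bigT D ^ 2 / n) : ℝ) : ℂ)

/-- `𝔞 = (6/π²) L'(1,χ)² ∏_{q ∣ D} q/(q+1)`. -/
def fraka (D : ℕ) (χ : DirichletCharacter ℂ D) : ℂ :=
  6 / (Real.pi : ℂ) ^ 2 * deriv (Lfun χ) 1 ^ 2 * ∏ q ∈ D.primeFactors, (q : ℂ) / ((q : ℂ) + 1)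


open ArithmeticFunction ArithmeticFunction.zeta in
lemma my_zeta_pow_submult : ∀ (k : ℕ) {m n : ℕ}, m ≠ 0 → n ≠ 0 →
    ((ζ ^ k) (m * n)) ≤ (ζ ^ k) m * (ζ ^ k) n := by
  intro k
  induction k with
  | zero =>
    intro m n hm hn
    simp only [pow_zero, ArithmeticFunction.one_apply]
    rcases eq_or_ne (m * n) 1 with h | h
    · have hm1 : m = 1 := Nat.dvd_one.mp ⟨n, h.symm⟩
      have hn1 : n = 1 := Nat.dvd_one.mp ⟨m, by rw [← h]; ring⟩
      simp [hm1, hn1]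
    · simp [h]
  | succ k ih =>
    intro m n hm hn
    rw [pow_succ', zeta_mul_apply, zeta_mul_apply, zeta_mul_apply]
    set f := (ζ ^ k : ArithmeticFunction ℕ) with hf
    have key : ∀ d ∈ (m * n).divisors,
        f d ≤ f (Nat.gcd d m) * f (d / Nat.gcd d m) := by
      intro d hd
      obtain ⟨hdvd, hmn⟩ := Nat.mem_divisors.mp hd
      have hd0 : d ≠ 0 := by
        rintro rfl
        exact hmn (Nat.eq_zero_of_zero_dvd hdvd)
      have hg0 : Nat.gcd d m ≠ 0 := Nat.gcd_ne_zero_left hd0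
      have hsplit : Nat.gcd d m * (d / Nat.gcd d m) = d :=
        Nat.mul_div_cancel' (Nat.gcd_dvd_left d m)
      have hq0 : d / Nat.gcd d m ≠ 0 := by
        intro h
        rw [h, Nat.mul_zero] at hsplit
        exact hd0 hsplit.symm
      calc f d = f (Nat.gcd d m * (d / Nat.gcd d m)) := by rw [hsplit]
        _ ≤ _ := ih hg0 hq0
    calc ∑ d ∈ (m * n).divisors, f d
        ≤ ∑ d ∈ (m * n).divisors, f (Nat.gcd d m) * f (d / Nat.gcd d m) :=
          Finset.sum_le_sum key
      _ = ∑ x ∈ (m * n).divisors.image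
            (fun d => (Nat.gcd d m, d / Nat.gcd d m)), f x.1 * f x.2 := by
          rw [Finset.sum_image]
          intro d hd d' hd' h
          rw [Prod.mk.injEq] at h
          have h1 : Nat.gcd d m * (d / Nat.gcd d m) = d :=
            Nat.mul_div_cancel' (Nat.gcd_dvd_left d m)
          have h2 : Nat.gcd d' m * (d' / Nat.gcd d' m) = d' :=
            Nat.mul_div_cancel' (Nat.gcd_dvd_left d' m)
          have h3 : d = Nat.gcd d' m * (d' / Nat.gcd d' m) := by
            rw [← h.2, ← h.1]; exact h1.symm
          exact h3.trans h2
      _ ≤ ∑ x ∈ m.divisors ×ˢ n.divisors, f x.1 * f x.2 := by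
          apply Finset.sum_le_sum_of_subset
          intro x hx
          obtain ⟨d, hd, rfl⟩ := Finset.mem_image.mp hx
          obtain ⟨hdvd, hmn⟩ := Nat.mem_divisors.mp hd
          have hd0 : d ≠ 0 := by
            rintro rfl
            exact hmn (Nat.eq_zero_of_zero_dvd hdvd)
          have hg0 : 0 < Nat.gcd d m := Nat.pos_of_ne_zero (Nat.gcd_ne_zero_left hd0)
          rw [Finset.mem_product]
          constructor
          · exact Nat.mem_divisors.mpr ⟨Nat.gcd_dvd_right d m, fun h => hmn (by simp [h])⟩
          · refine Nat.mem_divisors.mpr ⟨?_, fun h => hmn (by simp [h])⟩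
            have hco : Nat.Coprime (d / Nat.gcd d m) (m / Nat.gcd d m) :=
              Nat.coprime_div_gcd_div_gcd hg0
            apply hco.dvd_of_dvd_mul_left
            obtain ⟨e, he⟩ := hdvd
            refine ⟨e, ?_⟩
            apply Nat.eq_of_mul_eq_mul_left hg0
            rw [← Nat.mul_assoc, Nat.mul_div_cancel' (Nat.gcd_dvd_right d m),
              ← Nat.mul_assoc, Nat.mul_div_cancel' (Nat.gcd_dvd_left d m), he]
      _ = (∑ a ∈ m.divisors, f a) * ∑ b ∈ n.divisors, f b := by
          rw [Finset.sum_mul_sum, Finset.sum_product]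

open ArithmeticFunction ArithmeticFunction.zeta in
lemma my_zeta_pow_sq_le (l : ℕ) : ∀ (k : ℕ), k ≠ 0 → ∀ {n : ℕ}, n ≠ 0 →
    (ζ ^ k) n * (ζ ^ l) n ≤ (ζ ^ (k * l)) n := by
  intro k
  induction k with
  | zero => exact fun hk => absurd rfl hk
  | succ k ih =>
    intro _ n hn
    rcases eq_or_ne k 0 with rfl | hk0
    · simp only [zero_add, pow_one, one_mul]
      rw [zeta_apply_ne hn, one_mul]
    · rw [pow_succ', zeta_mul_apply]
      have step : ∑ d ∈ n.divisors, (ζ ^ k) d * (ζ ^ l) n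
          ≤ ∑ d ∈ n.divisors, (ζ ^ (k * l)) d * (ζ ^ l) (n / d) := by
        apply Finset.sum_le_sum
        intro d hd
        obtain ⟨hdvd, hn0⟩ := Nat.mem_divisors.mp hd
        have hd0 : d ≠ 0 := by rintro rfl; exact hn0 (Nat.eq_zero_of_zero_dvd hdvd)
        have hq0 : n / d ≠ 0 := by
          have := Nat.div_pos (Nat.le_of_dvd (Nat.pos_of_ne_zero hn0) hdvd)
            (Nat.pos_of_ne_zero hd0)
          omega
        have hnd : d * (n / d) = n := Nat.mul_div_cancel' hdvd
        calc (ζ ^ k) d * (ζ ^ l) n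
            = (ζ ^ k) d * (ζ ^ l) (d * (n / d)) := by rw [hnd]
          _ ≤ (ζ ^ k) d * ((ζ ^ l) d * (ζ ^ l) (n / d)) :=
              Nat.mul_le_mul_left _ (my_zeta_pow_submult l hd0 hq0)
          _ = ((ζ ^ k) d * (ζ ^ l) d) * (ζ ^ l) (n / d) := by ring
          _ ≤ (ζ ^ (k * l)) d * (ζ ^ l) (n / d) :=
              Nat.mul_le_mul_right _ (ih hk0 hd0)
      calc (∑ d ∈ n.divisors, (ζ ^ k) d) * (ζ ^ l) n
          = ∑ d ∈ n.divisors, (ζ ^ k) d * (ζ ^ l) n := by rw [Finset.sum_mul]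
        _ ≤ ∑ d ∈ n.divisors, (ζ ^ (k * l)) d * (ζ ^ l) (n / d) := step
        _ = (ζ ^ (k * l) * ζ ^ l) n := by
            rw [ArithmeticFunction.mul_apply, ← Nat.sum_divisorsAntidiagonal
              (fun a b => (ζ ^ (k * l)) a * (ζ ^ l) b)]
        _ = (ζ ^ (k * l + l)) n := by rw [← pow_add]
        _ = (ζ ^ ((k + 1) * l)) n := by ring_nf


lemma my_sum_antidiag_le (N : ℕ) (F : ℕ × ℕ → ℝ) (hF : ∀ x, 0 ≤ F x) :
    ∑ n ∈ Finset.Icc 1 N, ∑ x ∈ n.divisorsAntidiagonal, F x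
      ≤ ∑ x ∈ Finset.Icc 1 N ×ˢ Finset.Icc 1 N, F x := by
  rw [← Finset.sum_biUnion]
  · apply Finset.sum_le_sum_of_subset_of_nonneg
    · intro x hx
      obtain ⟨n, hn, hxn⟩ := Finset.mem_biUnion.mp hx
      obtain ⟨hprod, hn0⟩ := Nat.mem_divisorsAntidiagonal.mp hxn
      obtain ⟨hn1, hnN⟩ := Finset.mem_Icc.mp hn
      have hx1 : x.1 ≠ 0 := by rintro h; rw [← hprod, h] at hn0; simp at hn0
      have hx2 : x.2 ≠ 0 := by rintro h; rw [← hprod, h] at hn0; simp at hn0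
      rw [Finset.mem_product, Finset.mem_Icc, Finset.mem_Icc]
      refine ⟨⟨Nat.one_le_iff_ne_zero.mpr hx1, ?_⟩, ⟨Nat.one_le_iff_ne_zero.mpr hx2, ?_⟩⟩
      · exact le_trans (Nat.le_of_dvd (Nat.pos_of_ne_zero hn0) ⟨x.2, hprod.symm⟩) hnN
      · exact le_trans (Nat.le_of_dvd (Nat.pos_of_ne_zero hn0)
          ⟨x.1, by rw [← hprod]; ring⟩) hnN
    · intro x _ _
      exact hF x
  · intro a _ b _ hab
    apply Finset.disjoint_left.mpr
    intro x hxa hxb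
    obtain ⟨ha, _⟩ := Nat.mem_divisorsAntidiagonal.mp hxa
    obtain ⟨hb, _⟩ := Nat.mem_divisorsAntidiagonal.mp hxb
    exact hab (ha ▸ hb)

open ArithmeticFunction ArithmeticFunction.zeta in
lemma my_harmonic_pow (k N : ℕ) :
    ∑ n ∈ Finset.Icc 1 N, ((ζ ^ k) n : ℝ) / n
      ≤ (∑ m ∈ Finset.Icc 1 N, (1 : ℝ) / m) ^ k := by
  induction k with
  | zero =>
    simp only [pow_zero, ArithmeticFunction.one_apply]
    push_cast [apply_ite (fun m : ℕ => (m : ℝ))]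
    have : ∀ n ∈ Finset.Icc 1 N,
        ((if n = 1 then (1:ℝ) else 0)) / n = if n = 1 then (1:ℝ) else 0 := by
      intro n hn
      split_ifs with h
      · simp [h]
      · simp
    rw [Finset.sum_congr rfl this, Finset.sum_ite_eq' (Finset.Icc 1 N) 1 (fun _ => (1:ℝ))]
    split_ifs <;> norm_num
  | succ k ih =>
    have expand : ∀ n ∈ Finset.Icc 1 N, ((ζ ^ (k+1)) n : ℝ) / n
        = ∑ x ∈ n.divisorsAntidiagonal, (1 / (x.1 : ℝ)) * (((ζ ^ k) x.2 : ℝ) / x.2) := by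
      intro n hn
      obtain ⟨hn1, _⟩ := Finset.mem_Icc.mp hn
      have hn0 : n ≠ 0 := by omega
      rw [pow_succ', ArithmeticFunction.mul_apply]
      push_cast
      rw [Finset.sum_div]
      apply Finset.sum_congr rfl
      intro x hx
      obtain ⟨hprod, _⟩ := Nat.mem_divisorsAntidiagonal.mp hx
      have hx1 : x.1 ≠ 0 := by rintro h; rw [← hprod, h] at hn0; simp at hn0
      have hx2 : x.2 ≠ 0 := by rintro h; rw [← hprod, h] at hn0; simp at hn0
      rw [zeta_apply_ne hx1, ← hprod]
      have c1 : (x.1 : ℝ) ≠ 0 := Nat.cast_ne_zero.mpr hx1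
      have c2 : (x.2 : ℝ) ≠ 0 := Nat.cast_ne_zero.mpr hx2
      push_cast
      field_simp
      try ring
    rw [Finset.sum_congr rfl expand]
    calc ∑ n ∈ Finset.Icc 1 N, ∑ x ∈ n.divisorsAntidiagonal,
            (1 / (x.1 : ℝ)) * (((ζ ^ k) x.2 : ℝ) / x.2)
        ≤ ∑ x ∈ Finset.Icc 1 N ×ˢ Finset.Icc 1 N,
            (1 / (x.1 : ℝ)) * (((ζ ^ k) x.2 : ℝ) / x.2) := by
          apply my_sum_antidiag_le
          intro x
          positivity
      _ = (∑ m ∈ Finset.Icc 1 N, (1:ℝ)/m) * ∑ n ∈ Finset.Icc 1 N, ((ζ ^ k) n : ℝ)/n := by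
          rw [Finset.sum_mul_sum, Finset.sum_product]
      _ ≤ (∑ m ∈ Finset.Icc 1 N, (1:ℝ)/m) * (∑ m ∈ Finset.Icc 1 N, (1:ℝ)/m) ^ k := by
          apply mul_le_mul_of_nonneg_left ih
          apply Finset.sum_nonneg; intro i _; positivity
      _ = (∑ m ∈ Finset.Icc 1 N, (1:ℝ)/m) ^ (k+1) := by ring

lemma my_harmonic_le (N : ℕ) (hN : 1 ≤ N) :
    ∑ m ∈ Finset.Icc 1 N, (1 : ℝ) / m ≤ 1 + Real.log N := by
  have h := harmonic_le_one_add_log N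
  have heq : ∑ m ∈ Finset.Icc 1 N, (1 : ℝ) / m = (harmonic N : ℝ) := by
    rw [harmonic]
    push_cast
    rw [← Finset.Ico_add_one_right_eq_Icc, Finset.sum_Ico_eq_sum_range]
    apply Finset.sum_congr (by norm_num)
    intro i _
    push_cast
    rw [one_div, add_comm]
  rw [heq]
  exact h


open ArithmeticFunction ArithmeticFunction.zeta in
lemma my_norm_moebius_le (x : ℕ) : ‖((ArithmeticFunction.moebius x : ℤ) : ℂ)‖ ≤ 1 := by
  by_cases h : Squarefree x
  · rw [ArithmeticFunction.moebius_apply_of_squarefree h]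
    push_cast
    rw [norm_pow, norm_neg, norm_one, one_pow]
  · rw [ArithmeticFunction.moebius_eq_zero_of_not_squarefree h]
    simp

open ArithmeticFunction ArithmeticFunction.zeta in
lemma my_zeta_sq_eq (n : ℕ) (hn : n ≠ 0) :
    ((ζ^2 : ArithmeticFunction ℕ) n : ℝ) = (n.divisors.card : ℝ) := by
  rw [sq, zeta_mul_apply]
  rw [Finset.sum_congr rfl (fun i hi => zeta_apply_ne (Nat.pos_of_mem_divisors hi).ne')]
  simp

open ArithmeticFunction ArithmeticFunction.zeta in
lemma my_norm_nuT_le (D : ℕ) (χ : DirichletCharacter ℂ D) (n : ℕ) :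
    ‖nuT D χ n‖ ≤ ((ζ^2 : ArithmeticFunction ℕ) n : ℝ) := by
  rcases eq_or_ne n 0 with rfl | hn
  · simp
  · rw [my_zeta_sq_eq n hn]
    show ‖if n = 0 then 0 else if n ≤ D^4 then nuF D χ n else 0‖ ≤ _
    rw [if_neg hn]
    split_ifs with h
    · calc ‖nuF D χ n‖ ≤ ∑ d ∈ n.divisors, ‖χ (d : ZMod D)‖ := norm_sum_le _ _
        _ ≤ ∑ d ∈ n.divisors, 1 := Finset.sum_le_sum (fun d _ => χ.norm_le_one _)
        _ = (n.divisors.card : ℝ) := by simp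
    · rw [norm_zero]; positivity

open ArithmeticFunction ArithmeticFunction.zeta in
lemma my_norm_upsT_le (D : ℕ) (χ : DirichletCharacter ℂ D) (n : ℕ) :
    ‖upsT D χ n‖ ≤ ((ζ^2 : ArithmeticFunction ℕ) n : ℝ) := by
  rcases eq_or_ne n 0 with rfl | hn
  · simp
  · rw [my_zeta_sq_eq n hn]
    show ‖if n = 0 then 0 else if n ≤ D^4 then upsF D χ n else 0‖ ≤ _
    rw [if_neg hn]
    split_ifs with h
    · calc ‖upsF D χ n‖
          ≤ ∑ d ∈ n.divisors, ‖((ArithmeticFunction.moebius (n / d) : ℤ) : ℂ)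
              * ((ArithmeticFunction.moebius d : ℤ) : ℂ) * χ (d : ZMod D)‖ := norm_sum_le _ _
        _ ≤ ∑ d ∈ n.divisors, 1 := by
            apply Finset.sum_le_sum
            intro d _
            rw [norm_mul, norm_mul]
            calc ‖((ArithmeticFunction.moebius (n / d) : ℤ) : ℂ)‖ *
                  ‖((ArithmeticFunction.moebius d : ℤ) : ℂ)‖ * ‖χ (d : ZMod D)‖
                ≤ 1 * 1 * 1 := by
                  gcongr
                  · exact my_norm_moebius_le (n / d)
                  · exact my_norm_moebius_le d
                  · exact χ.norm_le_one ((d : ZMod D))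
              _ = 1 := by norm_num
        _ = (n.divisors.card : ℝ) := by simp
    · rw [norm_zero]; positivity

open ArithmeticFunction ArithmeticFunction.zeta in
lemma my_norm_conv_pow (f : ArithmeticFunction ℂ) (g : ArithmeticFunction ℕ)
    (h : ∀ n, ‖f n‖ ≤ (g n : ℝ)) : ∀ (k n : ℕ), ‖(f^k) n‖ ≤ ((g^k) n : ℝ) := by
  intro k
  induction k with
  | zero =>
    intro n
    simp only [pow_zero, ArithmeticFunction.one_apply]
    split_ifs <;> simp
  | succ k ih =>
    intro n
    rw [pow_succ', pow_succ', ArithmeticFunction.mul_apply, ArithmeticFunction.mul_apply]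
    calc ‖∑ x ∈ n.divisorsAntidiagonal, f x.1 * (f^k) x.2‖
        ≤ ∑ x ∈ n.divisorsAntidiagonal, ‖f x.1 * (f^k) x.2‖ := norm_sum_le _ _
      _ ≤ ∑ x ∈ n.divisorsAntidiagonal, (g x.1 : ℝ) * ((g^k) x.2 : ℝ) := by
          apply Finset.sum_le_sum
          intro x _
          rw [norm_mul]
          exact mul_le_mul (h x.1) (ih x.2) (norm_nonneg _) (Nat.cast_nonneg _)
      _ = (((g * g^k : ArithmeticFunction ℕ)) n : ℝ) := by
          rw [ArithmeticFunction.mul_apply]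
          push_cast
          rfl

open ArithmeticFunction ArithmeticFunction.zeta in
lemma my_norm_nu20_le (D : ℕ) (χ : DirichletCharacter ℂ D) (n : ℕ) :
    ‖nu20 D χ n‖ ≤ (((ζ^40 : ArithmeticFunction ℕ)) n : ℝ) := by
  have h := my_norm_conv_pow (nuT D χ) (ζ^2) (my_norm_nuT_le D χ) 20 n
  rw [← pow_mul] at h
  norm_num at h
  exact h

open ArithmeticFunction ArithmeticFunction.zeta in
lemma my_norm_ups20_le (D : ℕ) (χ : DirichletCharacter ℂ D) (n : ℕ) :
    ‖ups20 D χ n‖ ≤ (((ζ^40 : ArithmeticFunction ℕ)) n : ℝ) := by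
  have h := my_norm_conv_pow (upsT D χ) (ζ^2) (my_norm_upsT_le D χ) 20 n
  rw [← pow_mul] at h
  norm_num at h
  exact h

lemma my_ortho (p : ℕ) (hp : p.Prime) (M : ℕ) (hM : M < p) (c : ℕ → ℂ) :
    ∑ ψ : DirichletCharacter ℂ p, ‖∑ n ∈ Finset.Icc 1 M, c n * ψ (n : ZMod p)‖^2
      ≤ (p : ℝ) * ∑ n ∈ Finset.Icc 1 M, ‖c n‖^2 := by
  haveI : Fact p.Prime := ⟨hp⟩
  haveI : NeZero p := ⟨hp.pos.ne'⟩
  haveI : NeZero (Monoid.exponent (ZMod p)ˣ) := ⟨Monoid.exponent_ne_zero_of_finite⟩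
  have key : ∀ n ∈ Finset.Icc 1 M, ∀ m ∈ Finset.Icc 1 M,
      ∑ ψ : DirichletCharacter ℂ p, ψ (n : ZMod p) * (starRingEnd ℂ) (ψ (m : ZMod p))
        = if n = m then (p.totient : ℂ) else 0 := by
    intro n hn m hm
    obtain ⟨hn1, hnM⟩ := Finset.mem_Icc.mp hn
    obtain ⟨hm1, hmM⟩ := Finset.mem_Icc.mp hm
    have hmv : ((m : ZMod p)).val = m := ZMod.val_cast_of_lt (lt_of_le_of_lt hmM hM)
    have hnv : ((n : ZMod p)).val = n := ZMod.val_cast_of_lt (lt_of_le_of_lt hnM hM)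
    have hm0 : ((m : ZMod p)) ≠ 0 := by
      intro h
      rw [h, ZMod.val_zero] at hmv
      omega
    have hu : IsUnit ((m : ZMod p)) := isUnit_iff_ne_zero.mpr hm0
    have hconj : ∀ ψ : DirichletCharacter ℂ p,
        (starRingEnd ℂ) (ψ (m : ZMod p)) = ψ (((m : ZMod p))⁻¹) := by
      intro ψ
      rw [starRingEnd_apply, MulChar.star_apply', MulChar.inv_apply']
    calc ∑ ψ : DirichletCharacter ℂ p, ψ (n : ZMod p) * (starRingEnd ℂ) (ψ (m : ZMod p))
        = ∑ ψ : DirichletCharacter ℂ p, ψ (((m : ZMod p))⁻¹) * ψ (n : ZMod p) := by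
          apply Finset.sum_congr rfl
          intro ψ _
          rw [hconj ψ, mul_comm]
      _ = if (m : ZMod p) = (n : ZMod p) then (p.totient : ℂ) else 0 :=
          DirichletCharacter.sum_char_inv_mul_char_eq ℂ hu (n : ZMod p)
      _ = if n = m then (p.totient : ℂ) else 0 := by
          congr 1
          simp only [eq_iff_iff]
          constructor
          · intro h
            have := congrArg ZMod.val h
            rw [hmv, hnv] at this
            omega
          · intro h
            rw [h]
  set S : DirichletCharacter ℂ p → ℂ := fun ψ => ∑ n ∈ Finset.Icc 1 M, c n * ψ (n : ZMod p)
    with hS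
  have expand : ((∑ ψ : DirichletCharacter ℂ p, ‖S ψ‖^2 : ℝ) : ℂ)
      = (p.totient : ℂ) * ((∑ n ∈ Finset.Icc 1 M, ‖c n‖^2 : ℝ) : ℂ) := by
    push_cast
    calc ∑ ψ : DirichletCharacter ℂ p, (‖S ψ‖ : ℂ)^2
        = ∑ ψ : DirichletCharacter ℂ p, S ψ * (starRingEnd ℂ) (S ψ) := by
          apply Finset.sum_congr rfl
          intro ψ _
          rw [Complex.mul_conj']
      _ = ∑ ψ : DirichletCharacter ℂ p, ∑ n ∈ Finset.Icc 1 M, ∑ m ∈ Finset.Icc 1 M,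
            (c n * (starRingEnd ℂ) (c m)) * (ψ (n : ZMod p) * (starRingEnd ℂ) (ψ (m : ZMod p))) := by
          apply Finset.sum_congr rfl
          intro ψ _
          rw [hS]
          simp only [map_sum]
          rw [Finset.sum_mul_sum]
          apply Finset.sum_congr rfl
          intro n _
          apply Finset.sum_congr rfl
          intro m _
          rw [map_mul]
          ring
      _ = ∑ n ∈ Finset.Icc 1 M, ∑ m ∈ Finset.Icc 1 M,
            (c n * (starRingEnd ℂ) (c m)) *
              ∑ ψ : DirichletCharacter ℂ p, ψ (n : ZMod p) * (starRingEnd ℂ) (ψ (m : ZMod p)) := by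
          rw [Finset.sum_comm]
          apply Finset.sum_congr rfl
          intro n _
          rw [Finset.sum_comm]
          apply Finset.sum_congr rfl
          intro m _
          rw [Finset.mul_sum]
      _ = ∑ n ∈ Finset.Icc 1 M,
            (c n * (starRingEnd ℂ) (c n)) * (p.totient : ℂ) := by
          apply Finset.sum_congr rfl
          intro n hn
          rw [Finset.sum_eq_single_of_mem n hn]
          · rw [key n hn n hn, if_pos rfl]
          · intro m hm hmn
            rw [key n hn m hm, if_neg (fun h => hmn h.symm), mul_zero]
      _ = (p.totient : ℂ) * ∑ n ∈ Finset.Icc 1 M, (‖c n‖ : ℂ)^2 := by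
          rw [Finset.mul_sum]
          apply Finset.sum_congr rfl
          intro n _
          rw [Complex.mul_conj']
          ring
  have expand' : (∑ ψ : DirichletCharacter ℂ p, ‖S ψ‖^2 : ℝ)
      = (p.totient : ℝ) * ∑ n ∈ Finset.Icc 1 M, ‖c n‖^2 := by
    have := expand
    rw [show ((p.totient : ℂ)) = (((p.totient : ℝ)) : ℂ) by push_cast; rfl,
      ← Complex.ofReal_mul] at this
    exact_mod_cast this
  rw [expand']
  apply mul_le_mul_of_nonneg_right
  · exact_mod_cast Nat.totient_le p
  · apply Finset.sum_nonneg
    intro n _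
    positivity

lemma my_measurable_X1 (D : ℕ) (χ : DirichletCharacter ℂ D) {p : ℕ}
    (ψ : DirichletCharacter ℂ p) : Measurable (fun x : ℝ => X1 D χ ψ x) :=
  (measurable_from_nat (f := fun M : ℕ => ∑ n ∈ Finset.Icc 1 M,
      nu20 D χ n * ψ (n : ZMod p) * (n : ℂ) ^ (-s0 D))).comp Nat.measurable_floor

lemma my_measurable_X2 (D : ℕ) (χ : DirichletCharacter ℂ D) {p : ℕ}
    (ψ : DirichletCharacter ℂ p) : Measurable (fun x : ℝ => X2 D χ ψ x) :=
  (measurable_from_nat (f := fun M : ℕ => ∑ n ∈ Finset.Icc 1 M,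
      ups20 D χ n * ψ (n : ZMod p) * (n : ℂ) ^ (-s0 D))).comp Nat.measurable_floor

lemma my_X_norm_le (D : ℕ) (χ : DirichletCharacter ℂ D) {p : ℕ} (ψ : DirichletCharacter ℂ p)
    (g : ℕ → ℂ) (x : ℝ) (M : ℕ) (hfl : ⌊x⌋₊ ≤ M) :
    ‖∑ n ∈ Finset.Icc 1 ⌊x⌋₊, g n * ψ (n : ZMod p) * (n : ℂ) ^ (-s0 D)‖
      ≤ ∑ n ∈ Finset.Icc 1 M, ‖g n * (n : ℂ) ^ (-s0 D)‖ := by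
  calc ‖∑ n ∈ Finset.Icc 1 ⌊x⌋₊, g n * ψ (n : ZMod p) * (n : ℂ) ^ (-s0 D)‖
      ≤ ∑ n ∈ Finset.Icc 1 ⌊x⌋₊, ‖g n * ψ (n : ZMod p) * (n : ℂ) ^ (-s0 D)‖ :=
        norm_sum_le _ _
    _ ≤ ∑ n ∈ Finset.Icc 1 ⌊x⌋₊, ‖g n * (n : ℂ) ^ (-s0 D)‖ := by
        apply Finset.sum_le_sum
        intro n _
        rw [norm_mul, norm_mul, norm_mul]
        calc ‖g n‖ * ‖ψ ((n : ZMod p))‖ * ‖(n:ℂ) ^ (-s0 D)‖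
            ≤ ‖g n‖ * 1 * ‖(n:ℂ) ^ (-s0 D)‖ := by
              gcongr
              exact ψ.norm_le_one _
          _ = ‖g n‖ * ‖(n:ℂ) ^ (-s0 D)‖ := by ring
    _ ≤ ∑ n ∈ Finset.Icc 1 M, ‖g n * (n : ℂ) ^ (-s0 D)‖ := by
        apply Finset.sum_le_sum_of_subset_of_nonneg
        · exact Finset.Icc_subset_Icc_right hfl
        · intro n _ _
          positivity

lemma my_intable (D : ℕ) (χ : DirichletCharacter ℂ D) {p : ℕ} (ψ : DirichletCharacter ℂ p)
    {X : ℝ} (hX : 1 ≤ X) :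
    IntervalIntegrable (fun x => (‖X1 D χ ψ x‖ + ‖X2 D χ ψ x‖) / x)
      MeasureTheory.volume 1 X := by
  rw [intervalIntegrable_iff, Set.uIoc_of_le hX]
  have hmeas : Measurable fun x : ℝ => (‖X1 D χ ψ x‖ + ‖X2 D χ ψ x‖) / x :=
    ((my_measurable_X1 D χ ψ).norm.add (my_measurable_X2 D χ ψ).norm).div measurable_id
  apply MeasureTheory.Measure.integrableOn_of_bounded
    (M := (∑ n ∈ Finset.Icc 1 ⌊X⌋₊, ‖nu20 D χ n * (n:ℂ) ^ (-s0 D)‖)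
      + ∑ n ∈ Finset.Icc 1 ⌊X⌋₊, ‖ups20 D χ n * (n:ℂ) ^ (-s0 D)‖)
  · rw [Real.volume_Ioc]
    exact ENNReal.ofReal_ne_top
  · exact hmeas.aestronglyMeasurable
  · filter_upwards [MeasureTheory.ae_restrict_mem measurableSet_Ioc] with x hx
    have hx1 : (1:ℝ) ≤ x := hx.1.le
    have hxX : x ≤ X := hx.2
    have hflle : ⌊x⌋₊ ≤ ⌊X⌋₊ := Nat.floor_le_floor hxX
    have hb1 : ‖X1 D χ ψ x‖ ≤ ∑ n ∈ Finset.Icc 1 ⌊X⌋₊, ‖nu20 D χ n * (n:ℂ) ^ (-s0 D)‖ :=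
      my_X_norm_le D χ ψ (nu20 D χ) x ⌊X⌋₊ hflle
    have hb2 : ‖X2 D χ ψ x‖ ≤ ∑ n ∈ Finset.Icc 1 ⌊X⌋₊, ‖ups20 D χ n * (n:ℂ) ^ (-s0 D)‖ :=
      my_X_norm_le D χ ψ (ups20 D χ) x ⌊X⌋₊ hflle
    have hnn : 0 ≤ ‖X1 D χ ψ x‖ + ‖X2 D χ ψ x‖ := by positivity
    rw [Real.norm_eq_abs, abs_of_nonneg (by positivity : (0:ℝ) ≤ (‖X1 D χ ψ x‖ + ‖X2 D χ ψ x‖)/x)]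
    calc (‖X1 D χ ψ x‖ + ‖X2 D χ ψ x‖) / x ≤ (‖X1 D χ ψ x‖ + ‖X2 D χ ψ x‖) / 1 := by
          exact div_le_div_of_nonneg_left hnn one_pos hx1
      _ = ‖X1 D χ ψ x‖ + ‖X2 D χ ψ x‖ := by rw [div_one]
      _ ≤ _ := add_le_add hb1 hb2

lemma my_cs {p : ℕ} (B : Finset (DirichletCharacter ℂ p)) (F : DirichletCharacter ℂ p → ℝ)
    (hF : ∀ ψ, 0 ≤ F ψ) (Q : ℝ) (hQ : ∑ ψ : DirichletCharacter ℂ p, (F ψ)^2 ≤ Q) :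
    ∑ ψ ∈ B, F ψ ≤ Real.sqrt B.card * Real.sqrt Q := by
  have hsq : (∑ ψ ∈ B, F ψ)^2 ≤ (B.card : ℝ) * Q := by
    have hcs := Finset.sum_mul_sq_le_sq_mul_sq B (fun _ => (1:ℝ)) F
    simp only [one_mul, one_pow, Finset.sum_const, nsmul_eq_mul, mul_one] at hcs
    calc (∑ ψ ∈ B, F ψ)^2 ≤ (B.card : ℝ) * ∑ ψ ∈ B, (F ψ)^2 := hcs
      _ ≤ (B.card : ℝ) * Q := by
          apply mul_le_mul_of_nonneg_left _ (Nat.cast_nonneg _)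
          calc ∑ ψ ∈ B, (F ψ)^2 ≤ ∑ ψ : DirichletCharacter ℂ p, (F ψ)^2 :=
              Finset.sum_le_sum_of_subset_of_nonneg (Finset.subset_univ B)
                (fun _ _ _ => sq_nonneg _)
            _ ≤ Q := hQ
  have hnn : 0 ≤ ∑ ψ ∈ B, F ψ := Finset.sum_nonneg (fun ψ _ => hF ψ)
  calc ∑ ψ ∈ B, F ψ = Real.sqrt ((∑ ψ ∈ B, F ψ)^2) := (Real.sqrt_sq hnn).symm
    _ ≤ Real.sqrt ((B.card : ℝ) * Q) := Real.sqrt_le_sqrt hsq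
    _ = Real.sqrt B.card * Real.sqrt Q := Real.sqrt_mul (Nat.cast_nonneg _) _

lemma my_s0_re (D : ℕ) : (-(s0 D)).re = -(1/2 : ℝ) := by
  simp [s0]

open ArithmeticFunction ArithmeticFunction.zeta in
lemma my_coef (D : ℕ) (g : ℕ → ℂ) (hg : ∀ n, ‖g n‖ ≤ (((ζ^40 : ArithmeticFunction ℕ)) n : ℝ))
    (M N : ℕ) (hMN : M ≤ N) :
    ∑ n ∈ Finset.Icc 1 M, ‖g n * (n : ℂ) ^ (-s0 D)‖^2
      ≤ ∑ n ∈ Finset.Icc 1 N, (((ζ^1600 : ArithmeticFunction ℕ)) n : ℝ) / n := by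
  have hterm : ∀ n ∈ Finset.Icc 1 M, ‖g n * (n : ℂ) ^ (-s0 D)‖^2
      ≤ (((ζ^1600 : ArithmeticFunction ℕ)) n : ℝ) / n := by
    intro n hn
    obtain ⟨hn1, _⟩ := Finset.mem_Icc.mp hn
    have hn0 : 0 < n := hn1
    have hnR : (0:ℝ) < n := by exact_mod_cast hn0
    rw [norm_mul, Complex.norm_natCast_cpow_of_pos hn0, my_s0_re]
    have hpow : ((n:ℝ) ^ (-(1/2 : ℝ)))^2 = ((n:ℝ))⁻¹ := by
      rw [← Real.rpow_natCast ((n:ℝ) ^ (-(1/2:ℝ))) 2, ← Real.rpow_mul hnR.le]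
      norm_num
      rw [Real.rpow_neg_one]
    calc (‖g n‖ * (n:ℝ) ^ (-(1/2:ℝ)))^2
        = ‖g n‖^2 * (((n:ℝ) ^ (-(1/2:ℝ)))^2) := by ring
      _ = ‖g n‖^2 * ((n:ℝ))⁻¹ := by rw [hpow]
      _ ≤ ((((ζ^40 : ArithmeticFunction ℕ)) n : ℝ))^2 * ((n:ℝ))⁻¹ := by
          gcongr
          exact hg n
      _ ≤ (((ζ^1600 : ArithmeticFunction ℕ)) n : ℝ) * ((n:ℝ))⁻¹ := by
          gcongr
          have h := my_zeta_pow_sq_le 40 40 (by norm_num) (n := n) hn0.ne'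
          norm_num at h
          rw [sq]
          exact_mod_cast h
      _ = (((ζ^1600 : ArithmeticFunction ℕ)) n : ℝ) / n := by rw [div_eq_mul_inv]
  calc ∑ n ∈ Finset.Icc 1 M, ‖g n * (n : ℂ) ^ (-s0 D)‖^2
      ≤ ∑ n ∈ Finset.Icc 1 M, (((ζ^1600 : ArithmeticFunction ℕ)) n : ℝ) / n :=
        Finset.sum_le_sum hterm
    _ ≤ ∑ n ∈ Finset.Icc 1 N, (((ζ^1600 : ArithmeticFunction ℕ)) n : ℝ) / n := by
        apply Finset.sum_le_sum_of_subset_of_nonneg (Finset.Icc_subset_Icc_right hMN)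
        intro n _ _
        positivity

set_option maxHeartbeats 2000000 in
/-- The number of `ψ ∈ Ψ` for which (3.4) fails is `≤ C 𝒫 𝓛^{-740}`. -/
theorem statement4 :
    ∃ C : ℝ, 0 < C ∧ ∃ D₀ : ℕ, ∀ D : ℕ, D₀ ≤ D → ∀ χ : DirichletCharacter ℂ D,
      IsRealChar χ → χ.IsPrimitive →
        (∑ p ∈ primesP D,
            (Nat.card {ψ : DirichletCharacter ℂ p // ψ.IsPrimitive ∧ ¬Ineq1 D χ ψ} : ℝ)) ≤
          C * calP D * bigL D ^ (-740 : ℤ) := by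
  classical
  refine ⟨4 * 81 ^ 1602, by positivity, 100, ?_⟩
  intro D hD χ _ _
  have hD2 : (100:ℝ) ≤ (D:ℝ) := by exact_mod_cast hD
  have hL2 : (2:ℝ) ≤ bigL D := by
    rw [bigL, show (2:ℝ) = Real.log (Real.exp 2) by rw [Real.log_exp]]
    apply Real.log_le_log (Real.exp_pos 2)
    have h1 : Real.exp 1 < 2.7182818286 := Real.exp_one_lt_d9
    have h2 : Real.exp 2 = Real.exp 1 * Real.exp 1 := by
      rw [← Real.exp_add]; norm_num
    nlinarith [Real.exp_pos 1]
  have hL1 : (1:ℝ) ≤ bigL D := by linarith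
  have hL0 : (0:ℝ) < bigL D := by linarith
  have hD0 : (0:ℝ) < (D:ℝ) := by linarith
  have hX1 : (1:ℝ) ≤ (D:ℝ)^80 := one_le_pow₀ (by linarith)
  have hlogX : Real.log ((D:ℝ)^80) = 80 * bigL D := by
    rw [Real.log_pow, bigL]; norm_num
  have hXP : (D:ℝ)^80 < bigP D := by
    rw [bigP, show (D:ℝ)^80 = Real.exp (80 * bigL D) by
      rw [← hlogX, Real.exp_log (by positivity)]]
    apply Real.exp_lt_exp.mpr
    have h8 : (2:ℝ)^8 ≤ bigL D^8 := pow_le_pow_left₀ (by norm_num) hL2 8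
    nlinarith
  have hN1 : 1 ≤ ⌊(D:ℝ)^80⌋₊ := Nat.le_floor (by exact_mod_cast hX1)
  have hNX : ((⌊(D:ℝ)^80⌋₊ : ℕ) : ℝ) ≤ (D:ℝ)^80 := Nat.floor_le (by positivity)
  set N : ℕ := ⌊(D:ℝ)^80⌋₊ with hNdef
  set A : ℝ := ∑ n ∈ Finset.Icc 1 N, (((ArithmeticFunction.zeta^1600 : ArithmeticFunction ℕ)) n : ℝ)/n with hAdef
  have hA0 : (0:ℝ) ≤ A := Finset.sum_nonneg (fun n _ => by positivity)
  have hAle : A ≤ (81 * bigL D)^1600 := by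
    calc A ≤ (∑ m ∈ Finset.Icc 1 N, (1:ℝ)/m)^1600 := my_harmonic_pow 1600 N
      _ ≤ (81 * bigL D)^1600 := by
          apply pow_le_pow_left₀ (Finset.sum_nonneg (fun m _ => by positivity))
          · calc ∑ m ∈ Finset.Icc 1 N, (1:ℝ)/m ≤ 1 + Real.log N := my_harmonic_le N hN1
              _ ≤ 1 + 80 * bigL D := by
                  have hlog : Real.log N ≤ Real.log ((D:ℝ)^80) :=
                    Real.log_le_log (by exact_mod_cast hN1) hNX
                  rw [hlogX] at hlog
                  linarith
              _ ≤ 81 * bigL D := by linarith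
  have hcard : ∀ p : ℕ, (Nat.card {ψ : DirichletCharacter ℂ p // ψ.IsPrimitive ∧ ¬Ineq1 D χ ψ})
      = (Finset.univ.filter
          (fun ψ : DirichletCharacter ℂ p => ψ.IsPrimitive ∧ ¬Ineq1 D χ ψ)).card := by
    intro p
    rw [Nat.card_eq_fintype_card, Fintype.card_subtype]
  have key : ∀ p ∈ primesP D,
      ((Finset.univ.filter
          (fun ψ : DirichletCharacter ℂ p => ψ.IsPrimitive ∧ ¬Ineq1 D χ ψ)).card : ℝ)
        ≤ 4 * 81 ^ 1602 * (p:ℝ) * bigL D ^ (-740 : ℤ) := by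
    intro p hp
    have hSimP : SimP D p := (Finset.mem_filter.mp hp).2
    obtain ⟨hprime, hPp, _⟩ := hSimP
    have hXp : (D:ℝ)^80 < (p:ℝ) := hXP.trans hPp
    have hflp : ∀ x : ℝ, x ∈ Set.Icc (1:ℝ) ((D:ℝ)^80) → ⌊x⌋₊ < p := by
      intro x hx
      have h1 : (⌊x⌋₊ : ℝ) ≤ x := Nat.floor_le (by linarith [hx.1])
      have h2 : (⌊x⌋₊ : ℝ) < (p:ℝ) := lt_of_le_of_lt (h1.trans hx.2) hXp
      exact_mod_cast h2
    set B := Finset.univ.filter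
      (fun ψ : DirichletCharacter ℂ p => ψ.IsPrimitive ∧ ¬Ineq1 D χ ψ) with hBdef
    set b : ℝ := (B.card : ℝ) with hbdef
    have hb0 : (0:ℝ) ≤ b := Nat.cast_nonneg _
    set SQ : ℝ := Real.sqrt b * Real.sqrt ((p:ℝ) * A) with hSQdef
    have hSQ0 : (0:ℝ) ≤ SQ := by positivity
    have hCS : ∀ x ∈ Set.Icc (1:ℝ) ((D:ℝ)^80),
        (∑ ψ ∈ B, ‖X1 D χ ψ x‖ ≤ SQ) ∧ (∑ ψ ∈ B, ‖X2 D χ ψ x‖ ≤ SQ) := by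
      intro x hx
      have hfloorN : ⌊x⌋₊ ≤ N := Nat.floor_le_floor hx.2
      constructor
      · apply my_cs B _ (fun ψ => norm_nonneg _)
        have hortho := my_ortho p hprime ⌊x⌋₊ (hflp x hx)
          (fun n => nu20 D χ n * (n:ℂ) ^ (-s0 D))
        calc ∑ ψ : DirichletCharacter ℂ p, ‖X1 D χ ψ x‖^2
            = ∑ ψ : DirichletCharacter ℂ p,
                ‖∑ n ∈ Finset.Icc 1 ⌊x⌋₊,
                  (nu20 D χ n * (n:ℂ) ^ (-s0 D)) * ψ ((n : ZMod p))‖^2 := by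
              apply Finset.sum_congr rfl
              intro ψ _
              unfold X1
              congr 2
              apply Finset.sum_congr rfl
              intro n _
              ring
          _ ≤ (p:ℝ) * ∑ n ∈ Finset.Icc 1 ⌊x⌋₊, ‖nu20 D χ n * (n:ℂ) ^ (-s0 D)‖^2 := hortho
          _ ≤ (p:ℝ) * A := by
              apply mul_le_mul_of_nonneg_left _ (Nat.cast_nonneg _)
              exact my_coef D (nu20 D χ) (my_norm_nu20_le D χ) ⌊x⌋₊ N hfloorN
      · apply my_cs B _ (fun ψ => norm_nonneg _)
        have hortho := my_ortho p hprime ⌊x⌋₊ (hflp x hx)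
          (fun n => ups20 D χ n * (n:ℂ) ^ (-s0 D))
        calc ∑ ψ : DirichletCharacter ℂ p, ‖X2 D χ ψ x‖^2
            = ∑ ψ : DirichletCharacter ℂ p,
                ‖∑ n ∈ Finset.Icc 1 ⌊x⌋₊,
                  (ups20 D χ n * (n:ℂ) ^ (-s0 D)) * ψ ((n : ZMod p))‖^2 := by
              apply Finset.sum_congr rfl
              intro ψ _
              unfold X2
              congr 2
              apply Finset.sum_congr rfl
              intro n _
              ring
          _ ≤ (p:ℝ) * ∑ n ∈ Finset.Icc 1 ⌊x⌋₊, ‖ups20 D χ n * (n:ℂ) ^ (-s0 D)‖^2 := hortho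
          _ ≤ (p:ℝ) * A := by
              apply mul_le_mul_of_nonneg_left _ (Nat.cast_nonneg _)
              exact my_coef D (ups20 D χ) (my_norm_ups20_le D χ) ⌊x⌋₊ N hfloorN
    have hXmem : ((D:ℝ)^80) ∈ Set.Icc (1:ℝ) ((D:ℝ)^80) := ⟨hX1, le_refl _⟩
    have hcheb : b * bigL D ^ 1171 ≤ ∑ ψ ∈ B, (‖X1 D χ ψ ((D:ℝ)^80)‖ + ‖X2 D χ ψ ((D:ℝ)^80)‖
        + ∫ x in (1:ℝ)..((D:ℝ)^80), (‖X1 D χ ψ x‖ + ‖X2 D χ ψ x‖) / x) := by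
      have hthr : ∀ ψ ∈ B, bigL D ^ 1171 ≤ ‖X1 D χ ψ ((D:ℝ)^80)‖ + ‖X2 D χ ψ ((D:ℝ)^80)‖
          + ∫ x in (1:ℝ)..((D:ℝ)^80), (‖X1 D χ ψ x‖ + ‖X2 D χ ψ x‖) / x := by
        intro ψ hψ
        have h2 := (Finset.mem_filter.mp hψ).2.2
        exact not_lt.mp h2
      have h3 := Finset.card_nsmul_le_sum B _ _ hthr
      rwa [nsmul_eq_mul] at h3
    have hIbound : ∑ ψ ∈ B, (∫ x in (1:ℝ)..((D:ℝ)^80), (‖X1 D χ ψ x‖ + ‖X2 D χ ψ x‖) / x)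
        ≤ (2*SQ) * (80 * bigL D) := by
      have hint1 : IntervalIntegrable (fun x => ∑ ψ ∈ B, (‖X1 D χ ψ x‖ + ‖X2 D χ ψ x‖) / x)
          MeasureTheory.volume 1 ((D:ℝ)^80) := by
        have h4 := IntervalIntegrable.sum B
          (f := fun (ψ : DirichletCharacter ℂ p) => fun x : ℝ =>
            (‖X1 D χ ψ x‖ + ‖X2 D χ ψ x‖) / x)
          (fun ψ _ => my_intable D χ ψ hX1)
        have heq : (∑ ψ ∈ B, fun x : ℝ => (‖X1 D χ ψ x‖ + ‖X2 D χ ψ x‖) / x)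
            = fun x : ℝ => ∑ ψ ∈ B, (‖X1 D χ ψ x‖ + ‖X2 D χ ψ x‖) / x := by
          funext x
          simp
        rw [heq] at h4
        exact h4
      have hint2 : IntervalIntegrable (fun x : ℝ => (2*SQ) * (1/x))
          MeasureTheory.volume 1 ((D:ℝ)^80) := by
        apply ContinuousOn.intervalIntegrable
        have hne : ∀ x ∈ Set.uIcc (1:ℝ) ((D:ℝ)^80), x ≠ 0 := by
          intro x hx
          rw [Set.uIcc_of_le hX1] at hx
          have h1x := hx.1
          intro h0
          rw [h0] at h1x
          linarith
        exact continuousOn_const.mul (continuousOn_const.div continuousOn_id hne)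
      calc ∑ ψ ∈ B, (∫ x in (1:ℝ)..((D:ℝ)^80), (‖X1 D χ ψ x‖ + ‖X2 D χ ψ x‖) / x)
          = ∫ x in (1:ℝ)..((D:ℝ)^80), ∑ ψ ∈ B, (‖X1 D χ ψ x‖ + ‖X2 D χ ψ x‖) / x :=
            (intervalIntegral.integral_finset_sum (fun ψ _ => my_intable D χ ψ hX1)).symm
        _ ≤ ∫ x in (1:ℝ)..((D:ℝ)^80), (2*SQ) * (1/x) := by
            apply intervalIntegral.integral_mono_on hX1 hint1 hint2
            intro x hx
            have hx0 : (0:ℝ) < x := lt_of_lt_of_le one_pos hx.1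
            rw [← Finset.sum_div, mul_one_div]
            apply (div_le_div_iff_of_pos_right hx0).mpr
            rw [Finset.sum_add_distrib]
            have h61 := (hCS x hx).1
            have h62 := (hCS x hx).2
            linarith
        _ = (2*SQ) * ∫ x in (1:ℝ)..((D:ℝ)^80), 1/x :=
            intervalIntegral.integral_const_mul _ _
        _ = (2*SQ) * (80 * bigL D) := by
            rw [integral_one_div (by
              rw [Set.uIcc_of_le hX1]
              intro h
              exact absurd h.1 (by norm_num))]
            rw [div_one, hlogX]
    have htotal : b * bigL D ^ 1171 ≤ 162 * bigL D * SQ := by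
      have h5 : ∑ ψ ∈ B, (‖X1 D χ ψ ((D:ℝ)^80)‖ + ‖X2 D χ ψ ((D:ℝ)^80)‖
          + ∫ x in (1:ℝ)..((D:ℝ)^80), (‖X1 D χ ψ x‖ + ‖X2 D χ ψ x‖) / x)
          = (∑ ψ ∈ B, ‖X1 D χ ψ ((D:ℝ)^80)‖) + (∑ ψ ∈ B, ‖X2 D χ ψ ((D:ℝ)^80)‖)
            + ∑ ψ ∈ B, ∫ x in (1:ℝ)..((D:ℝ)^80), (‖X1 D χ ψ x‖ + ‖X2 D χ ψ x‖) / x := by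
        rw [Finset.sum_add_distrib, Finset.sum_add_distrib]
      have h6 := (hCS ((D:ℝ)^80) hXmem).1
      have h7 := (hCS ((D:ℝ)^80) hXmem).2
      have h8 : b * bigL D ^ 1171 ≤ SQ + SQ + (2*SQ) * (80 * bigL D) := by
        calc b * bigL D ^ 1171 ≤ _ := hcheb
          _ = _ := h5
          _ ≤ SQ + SQ + (2*SQ) * (80 * bigL D) := by
              apply add_le_add (add_le_add h6 h7) hIbound
      calc b * bigL D ^ 1171 ≤ SQ + SQ + (2*SQ) * (80 * bigL D) := h8
        _ ≤ 162 * bigL D * SQ := by nlinarith [hSQ0, hL1]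
    -- conclude
    rcases eq_or_lt_of_le hb0 with hb | hbpos
    · rw [← hb]
      positivity
    · have hsb : (0:ℝ) < Real.sqrt b := Real.sqrt_pos.mpr hbpos
      have hT : (0:ℝ) < bigL D ^ 1171 := by positivity
      have step1 : Real.sqrt b * bigL D ^ 1171 ≤ 162 * bigL D * Real.sqrt ((p:ℝ) * A) := by
        apply le_of_mul_le_mul_left _ hsb
        calc Real.sqrt b * (Real.sqrt b * bigL D ^ 1171)
            = (Real.sqrt b * Real.sqrt b) * bigL D ^ 1171 := by ring
          _ = b * bigL D ^ 1171 := by rw [Real.mul_self_sqrt hb0]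
          _ ≤ 162 * bigL D * SQ := htotal
          _ = Real.sqrt b * (162 * bigL D * Real.sqrt ((p:ℝ) * A)) := by
              rw [hSQdef]; ring
      have step2 : b ≤ (162 * bigL D * Real.sqrt ((p:ℝ) * A) / bigL D ^ 1171)^2 := by
        have h9 : Real.sqrt b ≤ 162 * bigL D * Real.sqrt ((p:ℝ) * A) / bigL D ^ 1171 :=
          (le_div_iff₀ hT).mpr step1
        calc b = (Real.sqrt b)^2 := (Real.sq_sqrt hb0).symm
          _ ≤ _ := pow_le_pow_left₀ (Real.sqrt_nonneg _) h9 2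
      have step3 : (162 * bigL D * Real.sqrt ((p:ℝ) * A) / bigL D ^ 1171)^2
          = 162^2 * bigL D^2 * ((p:ℝ) * A) / bigL D ^ 2342 := by
        rw [div_pow, mul_pow, mul_pow, Real.sq_sqrt (by positivity : (0:ℝ) ≤ (p:ℝ) * A),
          ← pow_mul]
        try norm_num
      have step4 : 162^2 * bigL D^2 * ((p:ℝ) * A) / bigL D ^ 2342
          ≤ 162^2 * bigL D^2 * ((p:ℝ) * (81 * bigL D)^1600) / bigL D ^ 2342 := by
        gcongr
      have step5 : 162^2 * bigL D^2 * ((p:ℝ) * (81 * bigL D)^1600) / bigL D ^ 2342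
          = 4 * 81 ^ 1602 * (p:ℝ) * bigL D ^ (-740 : ℤ) := by
        have hz : bigL D^(1602:ℕ) / bigL D^(2342:ℕ) = bigL D ^ (-740 : ℤ) := by
          rw [← zpow_natCast (bigL D) 1602, ← zpow_natCast (bigL D) 2342,
            ← zpow_sub₀ (ne_of_gt hL0)]
          norm_num
        calc 162^2 * bigL D^2 * ((p:ℝ) * (81 * bigL D)^1600) / bigL D ^ 2342
            = (4 * 81^1602 * (p:ℝ)) * (bigL D^1602 / bigL D^2342) := by
              rw [mul_pow, show (81:ℝ)^1602 = 81^1600 * 81^2 by rw [← pow_add]]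
              ring
          _ = 4 * 81 ^ 1602 * (p:ℝ) * bigL D ^ (-740 : ℤ) := by rw [hz]
      calc b ≤ _ := step2
        _ = _ := step3
        _ ≤ _ := step4
        _ = _ := step5
  calc ∑ p ∈ primesP D,
        (Nat.card {ψ : DirichletCharacter ℂ p // ψ.IsPrimitive ∧ ¬Ineq1 D χ ψ} : ℝ)
      = ∑ p ∈ primesP D, ((Finset.univ.filter
          (fun ψ : DirichletCharacter ℂ p => ψ.IsPrimitive ∧ ¬Ineq1 D χ ψ)).card : ℝ) := by
        apply Finset.sum_congr rfl
        intro p _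
        exact_mod_cast hcard p
    _ ≤ ∑ p ∈ primesP D, 4 * 81 ^ 1602 * (p:ℝ) * bigL D ^ (-740 : ℤ) :=
        Finset.sum_le_sum key
    _ = 4 * 81 ^ 1602 * calP D * bigL D ^ (-740 : ℤ) := by
        have hrw : ∀ p ∈ primesP D, 4 * 81 ^ 1602 * (p:ℝ) * bigL D ^ (-740:ℤ)
            = (4 * 81 ^ 1602 * bigL D ^ (-740:ℤ)) * (p:ℝ) := by
          intro p _
          ring
        rw [Finset.sum_congr rfl hrw, ← Finset.mul_sum, calP]
        ring

end
end

section
/- There is a positive absolute constant C such that the following holds. For every ψ ∈ Ψ₁ and every s ∈ Ω₁, one has |F(s,ψ)| + |G(s,ψ)| ≤ C·𝓛^{79}. -/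
open scoped Classical

noncomputable section

open Finset intervalIntegral

lemma conv_support {f g : ArithmeticFunction ℂ} {M1 M2 : ℕ}
    (hf : ∀ n, M1 < n → f n = 0) (hg : ∀ n, M2 < n → g n = 0) :
    ∀ n, M1 * M2 < n → (f * g) n = 0 := by
  intro n hn
  rw [ArithmeticFunction.mul_apply]
  refine Finset.sum_eq_zero fun p hp => ?_
  rw [Nat.mem_divisorsAntidiagonal] at hp
  rcases lt_or_ge M1 p.1 with h1 | h1
  · rw [hf _ h1, zero_mul]
  rcases lt_or_ge M2 p.2 with h2 | h2
  · rw [hg _ h2, mul_zero]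
  exfalso
  have hle := Nat.mul_le_mul h1 h2
  rw [hp.1] at hle
  exact absurd hn (not_lt.mpr hle)

lemma conv_sum {f g : ArithmeticFunction ℂ} {M1 M2 : ℕ} (hM1 : 1 ≤ M1) (hM2 : 1 ≤ M2)
    (hf : ∀ n, M1 < n → f n = 0) (hg : ∀ n, M2 < n → g n = 0)
    (h : ℕ → ℂ) (hh : ∀ a b : ℕ, 1 ≤ a → 1 ≤ b → h (a * b) = h a * h b) :
    ∑ n ∈ Icc 1 (M1 * M2), (f * g) n * h n
      = (∑ n ∈ Icc 1 M1, f n * h n) * (∑ n ∈ Icc 1 M2, g n * h n) := by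
  set N := M1 * M2 with hN
  have hMN1 : M1 ≤ N := Nat.le_mul_of_pos_right M1 hM2
  have hMN2 : M2 ≤ N := Nat.le_mul_of_pos_left M2 hM1
  -- LHS
  have hL : ∑ n ∈ Icc 1 N, (f * g) n * h n
      = ∑ p ∈ (Icc 1 N) ×ˢ (Icc 1 N), f p.1 * g p.2 * h p.1 * h p.2 := by
    have e1 : ∀ n ∈ Icc 1 N, (f * g) n * h n
        = ∑ p ∈ n.divisorsAntidiagonal, f p.1 * g p.2 * h p.1 * h p.2 := by
      intro n hn
      rw [ArithmeticFunction.mul_apply, Finset.sum_mul]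
      refine Finset.sum_congr rfl fun p hp => ?_
      rw [Nat.mem_divisorsAntidiagonal] at hp
      have hp1 : 1 ≤ p.1 := Nat.pos_of_ne_zero fun h0 => hp.2 (by rw [← hp.1, h0, zero_mul])
      have hp2 : 1 ≤ p.2 := Nat.pos_of_ne_zero fun h0 => hp.2 (by rw [← hp.1, h0, mul_zero])
      rw [← hp.1, hh _ _ hp1 hp2]; ring
    rw [Finset.sum_congr rfl e1]
    have hdisj : (↑(Icc 1 N) : Set ℕ).PairwiseDisjoint Nat.divisorsAntidiagonal := by
      intro m _ n _ hmn
      simp only [Function.onFun]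
      rw [Finset.disjoint_left]
      intro p hpm hpn
      rw [Nat.mem_divisorsAntidiagonal] at hpm hpn
      exact hmn (hpm.1.symm.trans hpn.1)
    rw [← Finset.sum_biUnion hdisj]
    have hset : (Icc 1 N).biUnion Nat.divisorsAntidiagonal
        = ((Icc 1 N) ×ˢ (Icc 1 N)).filter (fun p => p.1 * p.2 ≤ N) := by
      ext p
      simp only [Finset.mem_biUnion, Nat.mem_divisorsAntidiagonal, Finset.mem_filter,
        Finset.mem_product, Finset.mem_Icc]
      constructor
      · rintro ⟨n, hn, hpn, hn0⟩
        have hp1 : 1 ≤ p.1 := Nat.pos_of_ne_zero fun h0 => hn0 (by rw [← hpn, h0, zero_mul])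
        have hp2 : 1 ≤ p.2 := Nat.pos_of_ne_zero fun h0 => hn0 (by rw [← hpn, h0, mul_zero])
        refine ⟨⟨⟨hp1, ?_⟩, hp2, ?_⟩, ?_⟩
        · calc p.1 ≤ p.1 * p.2 := Nat.le_mul_of_pos_right _ hp2
            _ = n := hpn
            _ ≤ N := hn.2
        · calc p.2 ≤ p.1 * p.2 := Nat.le_mul_of_pos_left _ hp1
            _ = n := hpn
            _ ≤ N := hn.2
        · rw [hpn]; exact hn.2
      · rintro ⟨⟨⟨hp1, _⟩, hp2, _⟩, hle⟩
        exact ⟨p.1 * p.2, ⟨Nat.one_le_iff_ne_zero.mpr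
          (Nat.mul_ne_zero (by omega) (by omega)), hle⟩, rfl,
          Nat.mul_ne_zero (by omega) (by omega)⟩
    rw [hset]
    refine Finset.sum_filter_of_ne fun p hp hne => ?_
    by_contra hc
    push_neg at hc
    simp only [Finset.mem_product, Finset.mem_Icc] at hp
    rcases lt_or_ge M1 p.1 with h1 | h1
    · exact hne (by rw [hf _ h1]; ring)
    rcases lt_or_ge M2 p.2 with h2 | h2
    · exact hne (by rw [hg _ h2]; ring)
    exact absurd hc (not_lt.mpr (Nat.mul_le_mul h1 h2))
  -- RHS
  have hR : (∑ n ∈ Icc 1 M1, f n * h n) * (∑ n ∈ Icc 1 M2, g n * h n)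
      = ∑ p ∈ (Icc 1 N) ×ˢ (Icc 1 N), f p.1 * g p.2 * h p.1 * h p.2 := by
    rw [Finset.sum_mul_sum, ← Finset.sum_product']
    rw [Finset.sum_subset (Finset.product_subset_product (Finset.Icc_subset_Icc_right hMN1)
      (Finset.Icc_subset_Icc_right hMN2)) ?vanish]
    · exact Finset.sum_congr rfl fun p _ => by ring
    case vanish =>
      intro p hp hnp
      simp only [Finset.mem_product, Finset.mem_Icc] at hp hnp
      rcases lt_or_ge M1 p.1 with h1 | h1
      · rw [hf _ h1]; ring
      rcases lt_or_ge M2 p.2 with h2 | h2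
      · rw [hg _ h2]; ring
      exact absurd ⟨⟨hp.1.1, h1⟩, hp.2.1, h2⟩ hnp
  rw [hL, hR]

lemma conv_pow_support {f : ArithmeticFunction ℂ} {M : ℕ} (hf : ∀ n, M < n → f n = 0) :
    ∀ k, ∀ n, M ^ (k + 1) < n → (f ^ (k + 1)) n = 0 := by
  intro k
  induction k with
  | zero => simpa using hf
  | succ k ih =>
      intro n hn
      rw [pow_succ f]
      exact conv_support ih hf n (by rwa [← pow_succ])

lemma conv_pow_sum {f : ArithmeticFunction ℂ} {M : ℕ} (hM : 1 ≤ M)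
    (hf : ∀ n, M < n → f n = 0) (h : ℕ → ℂ)
    (hh : ∀ a b : ℕ, 1 ≤ a → 1 ≤ b → h (a * b) = h a * h b) :
    ∀ k, ∑ n ∈ Icc 1 (M ^ (k + 1)), (f ^ (k + 1)) n * h n
      = (∑ n ∈ Icc 1 M, f n * h n) ^ (k + 1) := by
  intro k
  induction k with
  | zero => simp
  | succ k ih =>
      rw [pow_succ f, pow_succ M,
        conv_sum (Nat.one_le_pow _ _ hM) hM (conv_pow_support hf k) hf h hh, ih, ← pow_succ]

lemma abel_aux (c φ : ℕ → ℂ) (N : ℕ) :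
    ∑ n ∈ Icc 1 N, c n * φ n =
      (∑ k ∈ Icc 1 N, c k) * φ (N + 1) +
        ∑ n ∈ Icc 1 N, (∑ k ∈ Icc 1 n, c k) * (φ n - φ (n + 1)) := by
  induction N with
  | zero => simp
  | succ N ih =>
      simp only [Finset.sum_Icc_succ_top (Nat.le_add_left 1 N)]
      rw [ih]
      ring

lemma cpow_diff_bound (w : ℂ) (n : ℕ) (hn : 1 ≤ n) (B : ℝ)
    (hB : ∀ x : ℝ, (n : ℝ) ≤ x → x ≤ (n : ℝ) + 1 → x ^ w.re ≤ B) :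
    ‖(n : ℂ) ^ w - ((n : ℂ) + 1) ^ w‖
      ≤ ‖w‖ * B * (Real.log ((n : ℝ) + 1) - Real.log n) := by
  have hn0 : (0 : ℝ) < (n : ℝ) := by exact_mod_cast hn
  have hmem : (0 : ℝ) ∉ Set.uIcc (n : ℝ) ((n : ℝ) + 1) := by
    rw [Set.uIcc_of_le (by linarith)]
    rintro ⟨h1, -⟩
    linarith
  rcases eq_or_ne w 0 with rfl | hw
  · simp
  have hr : w - 1 ≠ -1 := by
    intro h
    apply hw
    have := congrArg (· + 1) h
    simpa using this
  have hint : ∫ x in (n : ℝ)..((n : ℝ) + 1), (x : ℂ) ^ (w - 1)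
      = ((((n : ℝ) + 1 : ℝ) : ℂ) ^ w - ((n : ℝ) : ℂ) ^ w) / w := by
    rw [integral_cpow (Or.inr ⟨hr, hmem⟩)]
    norm_num
  have hid : (n : ℂ) ^ w - ((n : ℂ) + 1) ^ w
      = -(w * ∫ x in (n : ℝ)..((n : ℝ) + 1), (x : ℂ) ^ (w - 1)) := by
    rw [hint]
    push_cast
    field_simp
    ring
  rw [hid, norm_neg, norm_mul]
  have hbound : ∫ x in (n : ℝ)..((n : ℝ) + 1), ‖(x : ℂ) ^ (w - 1)‖
      ≤ B * (Real.log ((n : ℝ) + 1) - Real.log n) := by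
    have hi1 : IntervalIntegrable (fun x : ℝ => ‖(x : ℂ) ^ (w - 1)‖)
        MeasureTheory.volume (n : ℝ) ((n : ℝ) + 1) :=
      (intervalIntegrable_cpow (Or.inr hmem)).norm
    have hi2 : IntervalIntegrable (fun x : ℝ => B * x⁻¹)
        MeasureTheory.volume (n : ℝ) ((n : ℝ) + 1) := by
      apply ContinuousOn.intervalIntegrable
      refine continuousOn_const.mul (continuousOn_id.inv₀ fun x hx => ?_)
      rw [Set.uIcc_of_le (by linarith)] at hx
      exact ne_of_gt (lt_of_lt_of_le hn0 hx.1)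
    have hle : ∀ x ∈ Set.Icc (n : ℝ) ((n : ℝ) + 1), ‖(x : ℂ) ^ (w - 1)‖ ≤ B * x⁻¹ := by
      intro x hx
      have hx0 : 0 < x := lt_of_lt_of_le hn0 hx.1
      rw [Complex.norm_cpow_eq_rpow_re_of_pos hx0]
      have : (w - 1).re = w.re - 1 := by simp
      rw [this, Real.rpow_sub hx0, Real.rpow_one, div_eq_mul_inv]
      exact mul_le_mul_of_nonneg_right (hB x hx.1 hx.2) (by positivity)
    calc ∫ x in (n : ℝ)..((n : ℝ) + 1), ‖(x : ℂ) ^ (w - 1)‖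
        ≤ ∫ x in (n : ℝ)..((n : ℝ) + 1), B * x⁻¹ :=
          integral_mono_on (by linarith) hi1 hi2 hle
      _ = B * Real.log (((n : ℝ) + 1) / n) := by
          rw [integral_const_mul, integral_inv hmem]
      _ = B * (Real.log ((n : ℝ) + 1) - Real.log n) := by
          rw [Real.log_div (by linarith) (by linarith)]
  calc ‖w‖ * ‖∫ x in (n : ℝ)..((n : ℝ) + 1), (x : ℂ) ^ (w - 1)‖
      ≤ ‖w‖ * ∫ x in (n : ℝ)..((n : ℝ) + 1), ‖(x : ℂ) ^ (w - 1)‖ :=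
        mul_le_mul_of_nonneg_left (norm_integral_le_integral_norm (by linarith)) (norm_nonneg w)
    _ ≤ ‖w‖ * (B * (Real.log ((n : ℝ) + 1) - Real.log n)) :=
        mul_le_mul_of_nonneg_left hbound (norm_nonneg w)
    _ = ‖w‖ * B * (Real.log ((n : ℝ) + 1) - Real.log n) := by ring

lemma ae_ne_real (c : ℝ) : ∀ᵐ x : ℝ, x ≠ c := by
  rw [MeasureTheory.ae_iff]
  simpa using MeasureTheory.measure_singleton (c : ℝ)

lemma floor_piece (F : ℕ → ℝ) (m : ℕ) (hm : 1 ≤ m) :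
    IntervalIntegrable (fun x : ℝ => F ⌊x⌋₊ / x) MeasureTheory.volume (m : ℝ) ((m : ℝ) + 1)
    ∧ ∫ x in (m : ℝ)..((m : ℝ) + 1), F ⌊x⌋₊ / x
        = F m * (Real.log ((m : ℝ) + 1) - Real.log m) := by
  have hm0 : (0 : ℝ) < (m : ℝ) := by exact_mod_cast hm
  have hle : (m : ℝ) ≤ (m : ℝ) + 1 := by linarith
  have hae : ∀ᵐ x : ℝ, x ∈ Set.uIoc (m : ℝ) ((m : ℝ) + 1) →
      F ⌊x⌋₊ / x = F m / x := by
    filter_upwards [ae_ne_real ((m : ℝ) + 1)] with x hx hxI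
    rw [Set.uIoc_of_le hle] at hxI
    have hfl : ⌊x⌋₊ = m := by
      rw [Nat.floor_eq_iff (le_of_lt (lt_trans hm0 hxI.1))]
      exact ⟨le_of_lt hxI.1, lt_of_le_of_ne hxI.2 hx⟩
    rw [hfl]
  have hg : IntervalIntegrable (fun x : ℝ => F m / x)
      MeasureTheory.volume (m : ℝ) ((m : ℝ) + 1) := by
    apply ContinuousOn.intervalIntegrable
    simp only [div_eq_mul_inv]
    refine continuousOn_const.mul (continuousOn_id.inv₀ fun x hx => ?_)
    rw [Set.uIcc_of_le hle] at hx
    exact ne_of_gt (lt_of_lt_of_le hm0 hx.1)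
  have hmem : (0 : ℝ) ∉ Set.uIcc (m : ℝ) ((m : ℝ) + 1) := by
    rw [Set.uIcc_of_le hle]
    rintro ⟨h1, -⟩
    linarith
  constructor
  · rw [intervalIntegrable_iff] at hg ⊢
    exact hg.congr ((MeasureTheory.ae_restrict_iff' measurableSet_uIoc).mpr
      (hae.mono fun x h hx => (h hx).symm))
  · rw [integral_congr_ae hae]
    simp only [div_eq_mul_inv]
    rw [integral_const_mul, integral_inv hmem,
      Real.log_div (by linarith) (by linarith)]

lemma step_integral (F : ℕ → ℝ) (N : ℕ) (hN : 1 ≤ N) :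
    ∫ x in (1 : ℝ)..(N : ℝ), F ⌊x⌋₊ / x
      = ∑ n ∈ Icc 1 (N - 1), F n * (Real.log ((n : ℝ) + 1) - Real.log n) := by
  set a : ℕ → ℝ := fun i => ((i + 1 : ℕ) : ℝ) with ha
  have hint : ∀ k, k < N - 1 → IntervalIntegrable (fun x : ℝ => F ⌊x⌋₊ / x)
      MeasureTheory.volume (a k) (a (k + 1)) := by
    intro k _
    have := (floor_piece F (k + 1) (Nat.le_add_left 1 k)).1
    have hcast : a (k + 1) = (((k + 1 : ℕ)) : ℝ) + 1 := by simp only [ha]; push_cast; ring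
    rw [show a k = (((k + 1 : ℕ)) : ℝ) by simp only [ha], hcast]
    exact this
  have hsum := intervalIntegral.sum_integral_adjacent_intervals (μ := MeasureTheory.volume)
    (f := fun x : ℝ => F ⌊x⌋₊ / x) hint
  have ha0 : a 0 = (1 : ℝ) := by simp [ha]
  have haN : a (N - 1) = (N : ℝ) := by
    simp only [ha]
    congr 1
    omega
  rw [ha0, haN] at hsum
  rw [← hsum]
  rw [show Icc 1 (N - 1) = Ico 1 ((N - 1) + 1) from (Finset.Ico_add_one_right_eq_Icc ..).symm,
    Finset.sum_Ico_eq_sum_range]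
  refine Finset.sum_congr (by norm_num) fun k _ => ?_
  have := (floor_piece F (1 + k) (Nat.le_add_right 1 k)).2
  have hak : a k = ((1 + k : ℕ) : ℝ) := by simp only [ha]; push_cast; ring
  have hak1 : a (k + 1) = ((1 + k : ℕ) : ℝ) + 1 := by simp only [ha]; push_cast; ring
  rw [hak, hak1, this]

lemma log_diff_nonneg (n : ℕ) (hn : 1 ≤ n) :
    0 ≤ Real.log ((n : ℝ) + 1) - Real.log n := by
  have h0 : (0 : ℝ) < n := by exact_mod_cast hn
  have : Real.log (n : ℝ) ≤ Real.log ((n : ℝ) + 1) :=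
    (Real.log_le_log_iff (by linarith) (by linarith)).mpr (by linarith)
  linarith

lemma log_diff_le_one (n : ℕ) (hn : 1 ≤ n) :
    Real.log ((n : ℝ) + 1) - Real.log n ≤ 1 := by
  have h0 : (0 : ℝ) < n := by exact_mod_cast hn
  have h1 : (1 : ℝ) ≤ n := by exact_mod_cast hn
  have h2 : Real.log ((n : ℝ) + 1) ≤ Real.log (2 * n) :=
    (Real.log_le_log_iff (by linarith) (by linarith)).mpr (by linarith)
  rw [Real.log_mul two_ne_zero (ne_of_gt h0)] at h2
  have := Real.log_two_lt_d9
  linarith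

lemma key_bound (c : ℕ → ℂ) (w : ℂ) (N : ℕ) (hN : 1 ≤ N) (B M Cs CI : ℝ)
    (hB0 : 0 ≤ B) (hCs0 : 0 ≤ Cs)
    (hB : ∀ x : ℝ, 1 ≤ x → x ≤ (N : ℝ) + 1 → x ^ w.re ≤ B)
    (hw : ‖w‖ ≤ M)
    (hSN : ‖∑ k ∈ Icc 1 N, c k‖ ≤ Cs)
    (hI : ∑ n ∈ Icc 1 (N - 1),
      ‖∑ k ∈ Icc 1 n, c k‖ * (Real.log ((n : ℝ) + 1) - Real.log n) ≤ CI) :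
    ‖∑ n ∈ Icc 1 N, c n * (n : ℂ) ^ w‖ ≤ B * Cs + M * B * (CI + Cs) := by
  have hM0 : 0 ≤ M := le_trans (norm_nonneg w) hw
  rw [abel_aux c (fun m => (m : ℂ) ^ w) N]
  refine (norm_add_le _ _).trans ?_
  have h1 : ‖(∑ k ∈ Icc 1 N, c k) * (((N + 1 : ℕ) : ℂ)) ^ w‖ ≤ Cs * B := by
    rw [norm_mul]
    refine mul_le_mul hSN ?_ (norm_nonneg _) hCs0
    rw [show ((N + 1 : ℕ) : ℂ) = ((((N : ℝ) + 1 : ℝ)) : ℂ) by push_cast; ring,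
      Complex.norm_cpow_eq_rpow_re_of_pos (by positivity)]
    refine hB _ ?_ le_rfl
    have : (1 : ℝ) ≤ (N : ℝ) := by exact_mod_cast hN
    linarith
  have h2 : ‖∑ n ∈ Icc 1 N, (∑ k ∈ Icc 1 n, c k) * (((n : ℕ) : ℂ) ^ w - (((n + 1 : ℕ)) : ℂ) ^ w)‖
      ≤ M * B * (CI + Cs) := by
    refine (norm_sum_le _ _).trans ?_
    have hterm : ∀ n ∈ Icc 1 N,
        ‖(∑ k ∈ Icc 1 n, c k) * (((n : ℕ) : ℂ) ^ w - (((n + 1 : ℕ)) : ℂ) ^ w)‖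
          ≤ (M * B) * (‖∑ k ∈ Icc 1 n, c k‖ * (Real.log ((n : ℝ) + 1) - Real.log n)) := by
      intro n hn
      rw [Finset.mem_Icc] at hn
      have hn1 : (1 : ℝ) ≤ (n : ℝ) := by exact_mod_cast hn.1
      have hnN : (n : ℝ) ≤ (N : ℝ) := by exact_mod_cast hn.2
      rw [norm_mul, show (((n + 1 : ℕ)) : ℂ) = (n : ℂ) + 1 by push_cast; ring]
      have hd := cpow_diff_bound w n hn.1 B
        (fun x hx1 hx2 => hB x (le_trans hn1 hx1) (le_trans hx2 (by linarith)))
      have hld := log_diff_nonneg n hn.1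
      have h3 := mul_le_mul_of_nonneg_left hd (norm_nonneg (∑ k ∈ Icc 1 n, c k))
      refine h3.trans ?_
      nlinarith [mul_nonneg (sub_nonneg.mpr hw)
        (mul_nonneg (mul_nonneg (norm_nonneg (∑ k ∈ Icc 1 n, c k)) hB0) hld)]
    refine (Finset.sum_le_sum hterm).trans ?_
    rw [← Finset.mul_sum]
    have hsplit : ∑ n ∈ Icc 1 N,
        ‖∑ k ∈ Icc 1 n, c k‖ * (Real.log ((n : ℝ) + 1) - Real.log n) ≤ CI + Cs := by
      obtain ⟨N', rfl⟩ : ∃ N', N = N' + 1 := ⟨N - 1, by omega⟩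
      rw [Finset.sum_Icc_succ_top (Nat.le_add_left 1 N')]
      have hIs : Icc 1 (N' + 1 - 1) = Icc 1 N' := by norm_num
      rw [hIs] at hI
      have hlast : ‖∑ k ∈ Icc 1 (N' + 1), c k‖
          * (Real.log (((N' + 1 : ℕ) : ℝ) + 1) - Real.log ((N' + 1 : ℕ) : ℝ)) ≤ Cs := by
        calc _ ≤ Cs * 1 := mul_le_mul hSN (log_diff_le_one (N' + 1) (Nat.le_add_left 1 N'))
                  (log_diff_nonneg (N' + 1) (Nat.le_add_left 1 N')) hCs0
          _ = Cs := mul_one Cs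
      linarith
    calc (M * B) * ∑ n ∈ Icc 1 N,
          ‖∑ k ∈ Icc 1 n, c k‖ * (Real.log ((n : ℝ) + 1) - Real.log n)
        ≤ (M * B) * (CI + Cs) := mul_le_mul_of_nonneg_left hsplit (mul_nonneg hM0 hB0)
      _ = M * B * (CI + Cs) := by ring
  calc ‖(∑ k ∈ Icc 1 N, c k) * ((N + 1 : ℕ) : ℂ) ^ w‖
        + ‖∑ n ∈ Icc 1 N, (∑ k ∈ Icc 1 n, c k) * ((n : ℂ) ^ w - (((n + 1 : ℕ)) : ℂ) ^ w)‖
      ≤ Cs * B + M * B * (CI + Cs) := add_le_add h1 h2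
    _ = B * Cs + M * B * (CI + Cs) := by ring

section MainProof

open Finset intervalIntegral

/-- For every `ψ ∈ Ψ₁` and every `s ∈ Ω₁`,
`|F(s,ψ)| + |G(s,ψ)| ≤ C 𝓛^{79}`. -/
theorem statement7 :
    ∃ C : ℝ, 0 < C ∧ ∃ D₀ : ℕ, ∀ D : ℕ, D₀ ≤ D → ∀ χ : DirichletCharacter ℂ D,
      IsRealChar χ → χ.IsPrimitive →
        ∀ (p : ℕ) (ψ : DirichletCharacter ℂ p), MemPsi1 D χ ψ →
          ∀ s : ℂ, InOmega1 D s →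
            ‖Ffun D χ ψ s‖ + ‖Gfun D χ ψ s‖ ≤ C * bigL D ^ 79 := by
  refine ⟨2, by norm_num, 3 + ⌈Real.exp 100⌉₊, ?_⟩
  intro D hD χ _ _ p ψ hψ s hs
  obtain ⟨-, -, h1, -, -⟩ := hψ
  obtain ⟨hs1, hs2, hs3⟩ := hs
  rw [bigL1] at hs3
  unfold Ineq1 at h1
  -- Basic facts about L = log D
  have hD1 : (1 : ℕ) ≤ D := by omega
  have hDR : (100 : ℝ) ≤ Real.log D := by
    rw [Real.le_log_iff_exp_le (by exact_mod_cast Nat.pos_of_ne_zero (by omega))]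
    calc Real.exp 100 ≤ (⌈Real.exp 100⌉₊ : ℝ) := Nat.le_ceil _
      _ ≤ ((3 + ⌈Real.exp 100⌉₊ : ℕ) : ℝ) := by push_cast; linarith
      _ ≤ (D : ℝ) := by exact_mod_cast hD
  have hL100 : (100 : ℝ) ≤ bigL D := hDR
  have hL0 : (0 : ℝ) < bigL D := by linarith
  have hL1 : (1 : ℝ) ≤ bigL D := by linarith
  have hlogL0 : 0 ≤ Real.log (bigL D) := Real.log_nonneg hL1
  have hlogLL : Real.log (bigL D) ≤ bigL D := by
    have := Real.log_le_sub_one_of_pos hL0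
    linarith
  have hN1 : 1 ≤ D ^ 80 := Nat.one_le_pow _ _ (by omega)
  have hD4 : 1 ≤ D ^ 4 := Nat.one_le_pow _ _ (by omega)
  have hNcast : ((D : ℝ)) ^ 80 = ((D ^ 80 : ℕ) : ℝ) := by push_cast; ring
  have hNR1 : (1 : ℝ) ≤ ((D ^ 80 : ℕ) : ℝ) := by exact_mod_cast hN1
  -- s0 real and imaginary parts
  have hs0re : (s0 D).re = 1 / 2 := by
    simp [s0]
  have hs0im : (s0 D).im = 2 * Real.pi * t0 D := by
    simp [s0]
  set w : ℂ := s0 D - s with hw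
  have hwre : w.re = 1 / 2 - s.re := by rw [hw, Complex.sub_re, hs0re]
  have hwim : w.im = 2 * Real.pi * t0 D - s.im := by rw [hw, Complex.sub_im, hs0im]
  -- bound B = bigL D for x ^ w.re
  have hB : ∀ x : ℝ, 1 ≤ x → x ≤ ((D ^ 80 : ℕ) : ℝ) + 1 → x ^ w.re ≤ bigL D := by
    intro x hx1 hx2
    rcases le_or_gt w.re 0 with hre | hre
    · exact (Real.rpow_le_one_of_one_le_of_nonpos hx1 hre).trans hL1
    · have hxpos : (0 : ℝ) < x := by linarith
      rw [Real.rpow_def_of_pos hxpos]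
      have hlogx0 : 0 ≤ Real.log x := Real.log_nonneg hx1
      have hlogx : Real.log x ≤ Real.log (((D ^ 80 : ℕ) : ℝ) + 1) :=
        (Real.log_le_log_iff hxpos (by linarith)).mpr hx2
      have hlogN : Real.log (((D ^ 80 : ℕ) : ℝ) + 1) ≤ 81 * bigL D := by
        have h2N : (((D ^ 80 : ℕ) : ℝ) + 1) ≤ 2 * ((D ^ 80 : ℕ) : ℝ) := by linarith
        have hstep : Real.log (((D ^ 80 : ℕ) : ℝ) + 1) ≤ Real.log (2 * ((D ^ 80 : ℕ) : ℝ)) :=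
          (Real.log_le_log_iff (by linarith) (by linarith)).mpr h2N
        rw [Real.log_mul two_ne_zero (by linarith)] at hstep
        have hlogNN : Real.log ((D ^ 80 : ℕ) : ℝ) = 80 * bigL D := by
          rw [← hNcast, Real.log_pow]
          push_cast
          rfl
        have hlog2 : Real.log 2 ≤ 1 := by
          have := Real.log_two_lt_d9
          linarith
        rw [hlogNN] at hstep
        linarith
      have hrebound : w.re ≤ Real.log (bigL D) / (100 * bigL D) := by
        rw [hwre]; linarith
      have hmul : Real.log x * w.re ≤ Real.log (bigL D) := by
        have hstep : Real.log x * w.re ≤ (81 * bigL D) * (Real.log (bigL D) / (100 * bigL D)) := by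
          apply mul_le_mul (hlogx.trans hlogN) hrebound (le_of_lt hre) (by positivity)
        have heq : (81 * bigL D) * (Real.log (bigL D) / (100 * bigL D))
            = (81 / 100) * Real.log (bigL D) := by
          field_simp
        rw [heq] at hstep
        linarith
      calc Real.exp (Real.log x * w.re) ≤ Real.exp (Real.log (bigL D)) :=
            Real.exp_le_exp.mpr hmul
        _ = bigL D := Real.exp_log hL0
  -- bound for ‖w‖
  have h405 : (7 : ℝ) ≤ bigL D ^ 405 := by
    have : bigL D ≤ bigL D ^ 405 := le_self_pow₀ hL1 (by norm_num)
    linarith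
  have hnw : ‖w‖ ≤ 2 * bigL D ^ 405 := by
    have habs := Complex.norm_le_abs_re_add_abs_im w
    have hdle : Real.log (bigL D) / (100 * bigL D) ≤ 1 := by
      rw [div_le_one (by positivity)]
      linarith
    have hre2 : |w.re| ≤ 2 := by
      rw [hwre, abs_le]
      constructor <;> linarith
    have him : |w.im| ≤ bigL D ^ 405 + 5 := by
      rw [hwim, abs_sub_comm]
      linarith
    linarith
  -- the integral identity
  set Fc : ℕ → ℝ := fun n => ‖X1 D χ ψ ((n : ℕ) : ℝ)‖ + ‖X2 D χ ψ ((n : ℕ) : ℝ)‖ with hFc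
  have hfx : ∀ x : ℝ, (‖X1 D χ ψ x‖ + ‖X2 D χ ψ x‖) / x = Fc ⌊x⌋₊ / x := by
    intro x
    have e1 : X1 D χ ψ x = X1 D χ ψ ((⌊x⌋₊ : ℕ) : ℝ) := by
      simp only [X1]
      rw [Nat.floor_natCast]
    have e2 : X2 D χ ψ x = X2 D χ ψ ((⌊x⌋₊ : ℕ) : ℝ) := by
      simp only [X2]
      rw [Nat.floor_natCast]
    rw [hFc, e1, e2]
  have hIeq : (∫ x in (1 : ℝ)..((D : ℝ) ^ 80), (‖X1 D χ ψ x‖ + ‖X2 D χ ψ x‖) / x)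
      = ∑ n ∈ Icc 1 (D ^ 80 - 1), Fc n * (Real.log ((n : ℝ) + 1) - Real.log n) := by
    simp only [hfx]
    rw [hNcast]
    exact step_integral Fc (D ^ 80) hN1
  have hInonneg : 0 ≤ ∑ n ∈ Icc 1 (D ^ 80 - 1), Fc n * (Real.log ((n : ℝ) + 1) - Real.log n) := by
    refine Finset.sum_nonneg fun n hn => ?_
    rw [Finset.mem_Icc] at hn
    exact mul_nonneg (add_nonneg (norm_nonneg _) (norm_nonneg _)) (log_diff_nonneg n hn.1)
  rw [hIeq] at h1
  -- multiplicativity of n ↦ ψ(n) n^{-s}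
  set hfun : ℕ → ℂ := fun n => ψ (n : ZMod p) * (n : ℂ) ^ (-s) with hhfun
  have hh : ∀ a b : ℕ, 1 ≤ a → 1 ≤ b → hfun (a * b) = hfun a * hfun b := by
    intro a b _ _
    simp only [hhfun]
    rw [Nat.cast_mul, map_mul, Nat.cast_mul]
    rw [show ((a : ℂ) * (b : ℂ)) ^ (-s) = (a : ℂ) ^ (-s) * (b : ℂ) ^ (-s) by
      simp_rw [← Complex.ofReal_natCast]
      exact Complex.mul_cpow_ofReal_nonneg a.cast_nonneg b.cast_nonneg _]
    ring
  -- main estimate, applied to both F and G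
  have main : ∀ (f : ArithmeticFunction ℂ) (X : ℝ → ℂ),
      (∀ n, D ^ 4 < n → f n = 0) →
      (∀ x : ℝ, X x = ∑ n ∈ Icc 1 ⌊x⌋₊, (f ^ 20) n * ψ (n : ZMod p) * (n : ℂ) ^ (-s0 D)) →
      ‖X ((D : ℝ) ^ 80)‖ ≤ bigL D ^ 1171 →
      (∑ n ∈ Icc 1 (D ^ 80 - 1),
        ‖X ((n : ℕ) : ℝ)‖ * (Real.log ((n : ℝ) + 1) - Real.log n)) ≤ bigL D ^ 1171 →
      ‖∑ n ∈ Icc 1 (D ^ 4), f n * ψ (n : ZMod p) * (n : ℂ) ^ (-s)‖ ≤ bigL D ^ 79 := by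
    intro f X hsupp hX hXend hXint
    set c : ℕ → ℂ := fun n => (f ^ 20) n * ψ (n : ZMod p) * (n : ℂ) ^ (-s0 D) with hc
    have hXS : ∀ n : ℕ, X ((n : ℕ) : ℝ) = ∑ k ∈ Icc 1 n, c k := by
      intro n
      rw [hX, Nat.floor_natCast]
    -- convolution identity
    have hconv := conv_pow_sum hD4 hsupp hfun hh 19
    norm_num only at hconv
    rw [show (D ^ 4) ^ 20 = D ^ 80 by rw [← pow_mul]] at hconv
    have hsum1 : ∑ n ∈ Icc 1 (D ^ 4), f n * ψ (n : ZMod p) * (n : ℂ) ^ (-s)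
        = ∑ n ∈ Icc 1 (D ^ 4), f n * hfun n := by
      refine Finset.sum_congr rfl fun n _ => ?_
      simp only [hhfun]
      ring
    have hsum2 : ∑ n ∈ Icc 1 (D ^ 80), (f ^ 20) n * hfun n
        = ∑ n ∈ Icc 1 (D ^ 80), c n * (n : ℂ) ^ w := by
      refine Finset.sum_congr rfl fun n hn => ?_
      rw [Finset.mem_Icc] at hn
      have hne : (n : ℂ) ≠ 0 := Nat.cast_ne_zero.mpr (by omega)
      have hexp : (n : ℂ) ^ (-s) = (n : ℂ) ^ (-s0 D) * (n : ℂ) ^ w := by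
        rw [show -s = -s0 D + w by rw [hw]; ring, Complex.cpow_add _ _ hne]
      simp only [hc, hhfun]
      rw [hexp]
      ring
    have hnorm20 : ‖∑ n ∈ Icc 1 (D ^ 4), f n * ψ (n : ZMod p) * (n : ℂ) ^ (-s)‖ ^ 20
        = ‖∑ n ∈ Icc 1 (D ^ 80), c n * (n : ℂ) ^ w‖ := by
      rw [hsum1, ← norm_pow, ← hconv, hsum2]
    -- apply the key bound
    have hSN : ‖∑ k ∈ Icc 1 (D ^ 80), c k‖ ≤ bigL D ^ 1171 := by
      rw [← hXS]
      rw [← hNcast]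
      exact hXend
    have hI : ∑ n ∈ Icc 1 (D ^ 80 - 1),
        ‖∑ k ∈ Icc 1 n, c k‖ * (Real.log ((n : ℝ) + 1) - Real.log n) ≤ bigL D ^ 1171 := by
      calc ∑ n ∈ Icc 1 (D ^ 80 - 1),
          ‖∑ k ∈ Icc 1 n, c k‖ * (Real.log ((n : ℝ) + 1) - Real.log n)
          = ∑ n ∈ Icc 1 (D ^ 80 - 1),
            ‖X ((n : ℕ) : ℝ)‖ * (Real.log ((n : ℝ) + 1) - Real.log n) := by
            refine Finset.sum_congr rfl fun n _ => ?_
            rw [hXS]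
        _ ≤ bigL D ^ 1171 := hXint
    have hkey := key_bound c w (D ^ 80) hN1 (bigL D) (2 * bigL D ^ 405)
      (bigL D ^ 1171) (bigL D ^ 1171) (le_of_lt hL0) (by positivity) hB hnw hSN hI
    -- numeric estimate
    have hnum : bigL D * bigL D ^ 1171 + 2 * bigL D ^ 405 * bigL D
        * (bigL D ^ 1171 + bigL D ^ 1171) ≤ (bigL D ^ 79) ^ 20 := by
      have e1 : bigL D * bigL D ^ 1171 + 2 * bigL D ^ 405 * bigL D
          * (bigL D ^ 1171 + bigL D ^ 1171) = bigL D ^ 1172 + 4 * bigL D ^ 1577 := by ring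
      have e2 : (bigL D ^ 79) ^ 20 = bigL D ^ 1580 := by rw [← pow_mul]
      have h12 : bigL D ^ 1172 ≤ bigL D ^ 1577 := pow_le_pow_right₀ hL1 (by norm_num)
      have h5 : (5 : ℝ) ≤ bigL D ^ 3 := by
        have : bigL D ≤ bigL D ^ 3 := le_self_pow₀ hL1 (by norm_num)
        linarith
      have h1577 : (0 : ℝ) < bigL D ^ 1577 := by positivity
      have e3 : bigL D ^ 3 * bigL D ^ 1577 = bigL D ^ 1580 := by ring
      have h6 := mul_le_mul_of_nonneg_right h5 (le_of_lt h1577)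
      rw [e3] at h6
      rw [e1, e2]
      linarith
    have hfinal : ‖∑ n ∈ Icc 1 (D ^ 4), f n * ψ (n : ZMod p) * (n : ℂ) ^ (-s)‖ ^ 20
        ≤ (bigL D ^ 79) ^ 20 := by
      rw [hnorm20]
      exact hkey.trans hnum
    exact (pow_le_pow_iff_left₀ (norm_nonneg _) (by positivity) (by norm_num)).mp hfinal
  -- instantiate for F
  have hX1end : ‖X1 D χ ψ ((D : ℝ) ^ 80)‖ ≤ bigL D ^ 1171 := by
    have := norm_nonneg (X2 D χ ψ ((D : ℝ) ^ 80))
    linarith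
  have hX2end : ‖X2 D χ ψ ((D : ℝ) ^ 80)‖ ≤ bigL D ^ 1171 := by
    have := norm_nonneg (X1 D χ ψ ((D : ℝ) ^ 80))
    linarith
  have hIle : ∑ n ∈ Icc 1 (D ^ 80 - 1), Fc n * (Real.log ((n : ℝ) + 1) - Real.log n)
      ≤ bigL D ^ 1171 := by
    have := norm_nonneg (X1 D χ ψ ((D : ℝ) ^ 80))
    have := norm_nonneg (X2 D χ ψ ((D : ℝ) ^ 80))
    linarith
  have hX1int : ∑ n ∈ Icc 1 (D ^ 80 - 1),
      ‖X1 D χ ψ ((n : ℕ) : ℝ)‖ * (Real.log ((n : ℝ) + 1) - Real.log n) ≤ bigL D ^ 1171 := by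
    refine le_trans (Finset.sum_le_sum fun n hn => ?_) hIle
    rw [Finset.mem_Icc] at hn
    refine mul_le_mul_of_nonneg_right ?_ (log_diff_nonneg n hn.1)
    simp only [hFc]
    have := norm_nonneg (X2 D χ ψ ((n : ℕ) : ℝ))
    linarith
  have hX2int : ∑ n ∈ Icc 1 (D ^ 80 - 1),
      ‖X2 D χ ψ ((n : ℕ) : ℝ)‖ * (Real.log ((n : ℝ) + 1) - Real.log n) ≤ bigL D ^ 1171 := by
    refine le_trans (Finset.sum_le_sum fun n hn => ?_) hIle
    rw [Finset.mem_Icc] at hn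
    refine mul_le_mul_of_nonneg_right ?_ (log_diff_nonneg n hn.1)
    simp only [hFc]
    have := norm_nonneg (X1 D χ ψ ((n : ℕ) : ℝ))
    linarith
  have hsuppNu : ∀ n, D ^ 4 < n → (nuT D χ) n = 0 := by
    intro n hn
    simp only [nuT, ArithmeticFunction.coe_mk]
    rw [if_neg (by omega), if_neg (by omega)]
  have hsuppUps : ∀ n, D ^ 4 < n → (upsT D χ) n = 0 := by
    intro n hn
    simp only [upsT, ArithmeticFunction.coe_mk]
    rw [if_neg (by omega), if_neg (by omega)]
  have hFbound : ‖Ffun D χ ψ s‖ ≤ bigL D ^ 79 := by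
    have hFeq : Ffun D χ ψ s
        = ∑ n ∈ Icc 1 (D ^ 4), (nuT D χ) n * ψ (n : ZMod p) * (n : ℂ) ^ (-s) := by
      refine Finset.sum_congr rfl fun n hn => ?_
      rw [Finset.mem_Icc] at hn
      simp only [nuT, ArithmeticFunction.coe_mk]
      rw [if_neg (by omega), if_pos hn.2]
    rw [hFeq]
    exact main (nuT D χ) (X1 D χ ψ) hsuppNu (fun x => rfl) hX1end hX1int
  have hGbound : ‖Gfun D χ ψ s‖ ≤ bigL D ^ 79 := by
    have hGeq : Gfun D χ ψ s
        = ∑ n ∈ Icc 1 (D ^ 4), (upsT D χ) n * ψ (n : ZMod p) * (n : ℂ) ^ (-s) := by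
      refine Finset.sum_congr rfl fun n hn => ?_
      rw [Finset.mem_Icc] at hn
      simp only [upsT, ArithmeticFunction.coe_mk]
      rw [if_neg (by omega), if_pos hn.2]
    rw [hGeq]
    exact main (upsT D χ) (X2 D χ ψ) hsuppUps (fun x => rfl) hX2end hX2int
  linarith

end MainProof


end
end

section
/- There is a positive absolute constant C such that the following holds. For every ψ ∈ Ψ₁ and every s ∈ Ω₁, one has |F(s,ψ)·G(s,ψ) − 1| ≤ C·𝓛^{-227}. -/
open scoped Classical

noncomputable section

private lemma sum_moebius_complex (n : ℕ) :
    (∑ d ∈ n.divisors, ((ArithmeticFunction.moebius d : ℤ) : ℂ)) = if n = 1 then 1 else 0 := by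
  have h := congrArg (fun f : ArithmeticFunction ℂ => f n)
    (ArithmeticFunction.coe_moebius_mul_coe_zeta (R := ℂ))
  simp only [ArithmeticFunction.coe_mul_zeta_apply, ArithmeticFunction.one_apply,
    ArithmeticFunction.intCoe_apply] at h
  exact h

private lemma sigF_eq (D : ℕ) (χ : DirichletCharacter ℂ D) {n : ℕ} (hn : n ≠ 0)
    (h2 : n ≤ D ^ 4) : sigF D χ n = if n = 1 then 1 else 0 := by
  classical
  set Za : ArithmeticFunction ℂ := ↑(ArithmeticFunction.zeta) with hZa
  set Mu : ArithmeticFunction ℂ := ↑(ArithmeticFunction.moebius) with hMu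
  set Xc : ArithmeticFunction ℂ :=
    ⟨fun m => if m = 0 then 0 else χ (m : ZMod D), by simp⟩ with hXc
  set MXc : ArithmeticFunction ℂ :=
    ⟨fun m => if m = 0 then 0 else ((ArithmeticFunction.moebius m : ℤ) : ℂ) * χ (m : ZMod D),
      by simp⟩ with hMXc
  have hNU : ∀ m : ℕ, m ≠ 0 → (Za * Xc) m = nuF D χ m := by
    intro m hm
    rw [ArithmeticFunction.mul_apply,
      Nat.sum_divisorsAntidiagonal' (f := fun a b => Za a * Xc b)]
    refine Finset.sum_congr rfl fun d hd => ?_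
    obtain ⟨hdvd, hm0⟩ := Nat.mem_divisors.mp hd
    have hd0 : d ≠ 0 := by rintro rfl; exact hm0 (zero_dvd_iff.mp hdvd)
    have hq0 : m / d ≠ 0 := by
      have := Nat.div_pos (Nat.le_of_dvd (Nat.pos_of_ne_zero hm0) hdvd) (Nat.pos_of_ne_zero hd0)
      omega
    simp [hZa, hXc, ArithmeticFunction.natCoe_apply, ArithmeticFunction.zeta_apply, hq0, hd0,
      ArithmeticFunction.coe_mk]
  have hUPS : ∀ m : ℕ, m ≠ 0 → (Mu * MXc) m = upsF D χ m := by
    intro m hm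
    rw [ArithmeticFunction.mul_apply,
      Nat.sum_divisorsAntidiagonal' (f := fun a b => Mu a * MXc b)]
    refine Finset.sum_congr rfl fun d hd => ?_
    obtain ⟨hdvd, hm0⟩ := Nat.mem_divisors.mp hd
    have hd0 : d ≠ 0 := by rintro rfl; exact hm0 (zero_dvd_iff.mp hdvd)
    simp only [hMu, hMXc, ArithmeticFunction.intCoe_apply, ArithmeticFunction.coe_mk,
      if_neg hd0]
    ring
  have hXMX : Xc * MXc = 1 := by
    ext m
    rcases eq_or_ne m 0 with rfl | hm
    · simp
    rw [ArithmeticFunction.mul_apply, ArithmeticFunction.one_apply]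
    have step : ∀ q ∈ m.divisorsAntidiagonal, Xc q.1 * MXc q.2
        = ((ArithmeticFunction.moebius q.2 : ℤ) : ℂ) * χ (m : ZMod D) := by
      intro q hq
      obtain ⟨hqm, -⟩ := Nat.mem_divisorsAntidiagonal.mp hq
      have h1 : q.1 ≠ 0 := by rintro h; rw [h, zero_mul] at hqm; exact hm hqm.symm
      have hq2 : q.2 ≠ 0 := by rintro h; rw [h, mul_zero] at hqm; exact hm hqm.symm
      have hc : χ (q.1 : ZMod D) * χ (q.2 : ZMod D) = χ (m : ZMod D) := by
        rw [← map_mul, ← Nat.cast_mul, hqm]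
      simp only [hXc, hMXc, ArithmeticFunction.coe_mk, if_neg h1, if_neg hq2]
      rw [← hc]; ring
    rw [Finset.sum_congr rfl step, ← Finset.sum_mul]
    have hmu : (∑ q ∈ m.divisorsAntidiagonal, ((ArithmeticFunction.moebius q.2 : ℤ) : ℂ))
        = if m = 1 then 1 else 0 := by
      rw [Nat.sum_divisorsAntidiagonal (f := fun _ b => ((ArithmeticFunction.moebius b : ℤ) : ℂ)),
        Nat.sum_div_divisors m (fun k => ((ArithmeticFunction.moebius k : ℤ) : ℂ))]
      exact sum_moebius_complex m
    rw [hmu]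
    split_ifs with h
    · subst h; simp
    · simp
  have key : (Za * Xc) * (Mu * MXc) = 1 := by
    have h' : (Za * Xc) * (Mu * MXc) = (Za * Mu) * (Xc * MXc) := by ring
    rw [h', hXMX, hZa, hMu, ArithmeticFunction.coe_zeta_mul_coe_moebius, mul_one]
  have h1 : sigF D χ n = ∑ d ∈ n.divisors, nuF D χ d * upsF D χ (n / d) := by
    rw [sigF]
    refine Finset.sum_congr rfl fun d hd => ?_
    obtain ⟨hdvd, -⟩ := Nat.mem_divisors.mp hd
    rw [if_pos ⟨le_trans (Nat.le_of_dvd (Nat.pos_of_ne_zero hn) hdvd) h2,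
      le_trans (Nat.div_le_self n d) h2⟩]
  have h2' : sigF D χ n = ((Za * Xc) * (Mu * MXc)) n := by
    rw [h1, ArithmeticFunction.mul_apply,
      Nat.sum_divisorsAntidiagonal (f := fun a b => (Za * Xc) a * (Mu * MXc) b)]
    refine Finset.sum_congr rfl fun d hd => ?_
    obtain ⟨hdvd, -⟩ := Nat.mem_divisors.mp hd
    have hd0 : d ≠ 0 := by rintro rfl; exact hn (zero_dvd_iff.mp hdvd)
    have hq0 : n / d ≠ 0 := by
      have := Nat.div_pos (Nat.le_of_dvd (Nat.pos_of_ne_zero hn) hdvd) (Nat.pos_of_ne_zero hd0)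
      omega
    rw [hNU d hd0, hUPS (n / d) hq0]
  rw [h2', key, ArithmeticFunction.one_apply]


private lemma sum_conv (K : ℕ) (f : ℕ × ℕ → ℂ) :
    ∑ n ∈ Finset.Icc 1 K, ∑ q ∈ n.divisorsAntidiagonal, f q =
      ∑ q ∈ (Finset.Icc 1 K ×ˢ Finset.Icc 1 K).filter (fun q => q.1 * q.2 ≤ K), f q := by
  rw [Finset.sum_sigma' (Finset.Icc 1 K) (fun n => n.divisorsAntidiagonal) (fun _ q => f q)]
  refine Finset.sum_nbij' (fun q => q.2) (fun q => ⟨q.1 * q.2, q⟩) ?_ ?_ ?_ ?_ ?_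
  · rintro ⟨n, a, b⟩ h
    simp only [Finset.mem_sigma, Finset.mem_Icc, Nat.mem_divisorsAntidiagonal] at h
    obtain ⟨⟨h1, h2⟩, hab, hn0⟩ := h
    subst hab
    have ha : 1 ≤ a := Nat.pos_of_ne_zero (by rintro rfl; simp at hn0)
    have hb : 1 ≤ b := Nat.pos_of_ne_zero (by rintro rfl; simp at hn0)
    simp only [Finset.mem_filter, Finset.mem_product, Finset.mem_Icc]
    exact ⟨⟨⟨ha, le_trans (Nat.le_mul_of_pos_right a hb) h2⟩,
      ⟨hb, le_trans (Nat.le_mul_of_pos_left b ha) h2⟩⟩, h2⟩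
  · rintro ⟨a, b⟩ h
    simp only [Finset.mem_filter, Finset.mem_product, Finset.mem_Icc] at h
    obtain ⟨⟨⟨ha1, haK⟩, hb1, hbK⟩, hab⟩ := h
    exact Finset.mem_sigma.mpr ⟨Finset.mem_Icc.mpr
      ⟨Nat.one_le_iff_ne_zero.mpr (Nat.mul_ne_zero (by omega) (by omega)), hab⟩,
      Nat.mem_divisorsAntidiagonal.mpr ⟨rfl, Nat.mul_ne_zero (by omega) (by omega)⟩⟩
  · rintro ⟨n, a, b⟩ h
    simp only [Finset.mem_sigma, Finset.mem_Icc, Nat.mem_divisorsAntidiagonal] at h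
    obtain ⟨-, hab, -⟩ := h
    subst hab
    rfl
  · intro q hq; rfl
  · intro q hq; rfl

private lemma abel_sum (c bb : ℕ → ℂ) (M : ℕ) :
    ∀ N, M ≤ N →
      ∑ n ∈ Finset.Ioc M N, c n * bb n =
        (∑ k ∈ Finset.Ioc M N, c k) * bb N -
          ∑ n ∈ Finset.Ico M N, (∑ k ∈ Finset.Ioc M n, c k) * (bb (n + 1) - bb n) := by
  intro N
  induction N with
  | zero =>
    intro h
    have h0 : M = 0 := Nat.le_zero.mp h
    subst h0; simp
  | succ N ih =>
    intro h
    rcases eq_or_lt_of_le h with heq | hlt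
    · rw [← heq]; simp
    · have hMN : M ≤ N := Nat.lt_succ_iff.mp hlt
      rw [Finset.sum_Ioc_succ_top hMN, Finset.sum_Ioc_succ_top hMN (fun k => c k),
        Finset.sum_Ico_succ_top hMN, ih hMN]
      ring


set_option maxHeartbeats 2000000 in
/-- For every `ψ ∈ Ψ₁` and every `s ∈ Ω₁`,
`|F(s,ψ) G(s,ψ) - 1| ≤ C 𝓛^{-227}`. -/
theorem statement8 :
    ∃ C : ℝ, 0 < C ∧ ∃ D₀ : ℕ, ∀ D : ℕ, D₀ ≤ D → ∀ χ : DirichletCharacter ℂ D,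
      IsRealChar χ → χ.IsPrimitive →
        ∀ (p : ℕ) (ψ : DirichletCharacter ℂ p), MemPsi1 D χ ψ →
          ∀ s : ℂ, InOmega1 D s →
            ‖Ffun D χ ψ s * Gfun D χ ψ s - 1‖ ≤ C * bigL D ^ (-227 : ℤ) := by
  refine ⟨4, by norm_num, 10, fun D hD χ _ _ p ψ hmem s hs => ?_⟩
  obtain ⟨-, -, -, -, hineq3⟩ := hmem
  have hD2 : (2 : ℕ) ≤ D := le_trans (by norm_num) hD
  have hD0 : 0 < D := by omega
  have hDR : (10 : ℝ) ≤ (D : ℝ) := by exact_mod_cast hD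
  have hL2 : (2 : ℝ) ≤ bigL D := by
    rw [bigL]
    have h1 : Real.exp 2 < 10 := by
      have he := Real.exp_one_lt_d9
      have h2 : Real.exp 2 = Real.exp 1 ^ 2 := by rw [Real.exp_one_pow]; norm_num
      rw [h2]; nlinarith [Real.exp_pos 1]
    have h3 := (Real.lt_log_iff_exp_lt (by linarith : (0:ℝ) < (D:ℝ))).mpr
      (lt_of_lt_of_le h1 hDR)
    linarith
  set L : ℝ := bigL D with hLdef
  have hL0 : (0:ℝ) < L := by linarith
  have hL1 : (1:ℝ) ≤ L := by linarith
  have hLne : L ≠ 0 := ne_of_gt hL0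
  have hlogL0 : 0 < Real.log L := Real.log_pos (by linarith)
  have hlogLle : Real.log L ≤ L := (Real.log_le_sub_one_of_pos hL0).trans (by linarith)
  have hε : Real.log L / (100 * L) ≤ 1 / 100 := by
    rw [div_le_div_iff₀ (by positivity) (by norm_num)]
    nlinarith
  obtain ⟨hs1, hs2, hs3⟩ := hs
  have hs0re : (s0 D).re = 1 / 2 := by
    simp [s0]
  have hs0im : (s0 D).im = 2 * Real.pi * t0 D := by
    simp [s0]
  set w : ℂ := s0 D - s with hw
  have hwre : w.re = 1 / 2 - s.re := by rw [hw, Complex.sub_re, hs0re]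
  have hσlt : w.re < Real.log L / (100 * L) := by rw [hwre]; linarith
  have hσlb : -1 ≤ w.re := by rw [hwre]; linarith
  have hwim : |w.im| < bigL1 D + 5 := by
    rw [hw, Complex.sub_im, hs0im, abs_sub_comm]
    exact hs3
  have hL405 : (6:ℝ) ≤ L ^ 405 := by
    have h8 : (2:ℝ) ^ 3 ≤ 2 ^ 405 := pow_le_pow_right₀ (by norm_num) (by norm_num)
    have h9 : (2:ℝ) ^ 405 ≤ L ^ 405 := pow_le_pow_left₀ (by norm_num) hL2 405
    exact ((le_trans (by norm_num : (6:ℝ) ≤ 2 ^ 3) h8).trans h9)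
  have hnormw : ‖w‖ ≤ 2 * L ^ 405 := by
    have h1 : ‖w‖ ≤ |w.re| + |w.im| := Complex.norm_le_abs_re_add_abs_im w
    have h2 : |w.re| ≤ 1 := abs_le.mpr ⟨by linarith, by linarith [hε]⟩
    have h3 : bigL1 D = L ^ 405 := rfl
    rw [h3] at hwim
    linarith
  have hnormw0 : (0:ℝ) ≤ ‖w‖ := norm_nonneg w
  -- uniform bound x ^ w.re ≤ L on [1, D^8]
  have hrpow : ∀ x : ℝ, 1 ≤ x → x ≤ (D:ℝ) ^ 8 → x ^ w.re ≤ L := by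
    intro x h1 h2
    rcases le_or_gt w.re 0 with h | h
    · exact (Real.rpow_le_one_of_one_le_of_nonpos h1 h).trans hL1
    · have hx0 : (0:ℝ) ≤ x := by linarith
      have hstep : x ^ w.re ≤ ((D:ℝ) ^ 8) ^ w.re := Real.rpow_le_rpow hx0 h2 h.le
      have hD8 : (0:ℝ) < (D:ℝ) ^ 8 := by positivity
      have heq : ((D:ℝ) ^ 8) ^ w.re = Real.exp (8 * L * w.re) := by
        rw [Real.rpow_def_of_pos hD8, Real.log_pow]
        norm_num [hLdef, bigL]
      have hle : 8 * L * w.re ≤ Real.log L := by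
        have h8 : 8 * L * w.re ≤ 8 * L * (Real.log L / (100 * L)) :=
          mul_le_mul_of_nonneg_left hσlt.le (by positivity)
        have heq2 : 8 * L * (Real.log L / (100 * L)) = (8 / 100) * Real.log L := by
          field_simp
        nlinarith
      calc x ^ w.re ≤ Real.exp (8 * L * w.re) := heq ▸ hstep
        _ ≤ Real.exp (Real.log L) := Real.exp_le_exp.mpr hle
        _ = L := Real.exp_log hL0
  -- notation
  set M : ℕ := D ^ 4 with hM
  set N : ℕ := D ^ 8 with hN
  have hMN : M < N := Nat.pow_lt_pow_right (by omega) (by omega)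
  have hM1 : 1 ≤ M := Nat.one_le_pow _ _ hD0
  set c : ℕ → ℂ := fun n => sigF D χ n * ψ (n : ZMod p) * (n : ℂ) ^ (-s0 D) with hc
  set bb : ℕ → ℂ := fun n => (n : ℂ) ^ w with hbb
  have hA : ∀ n : ℕ, X4 D χ ψ (n : ℝ) = ∑ k ∈ Finset.Ioc M n, c k := by
    intro n
    simp only [X4, Nat.floor_natCast, hc, hM]
  -- Step A : product formula
  have hFG : Ffun D χ ψ s * Gfun D χ ψ s - 1 =
      ∑ n ∈ Finset.Ioc M N, sigF D χ n * ψ (n : ZMod p) * (n : ℂ) ^ (-s) := by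
    have hprod : Ffun D χ ψ s * Gfun D χ ψ s =
        ∑ n ∈ Finset.Icc 1 N, sigF D χ n * ψ (n : ZMod p) * (n : ℂ) ^ (-s) := by
      set f : ℕ × ℕ → ℂ := fun q =>
        (if q.1 ≤ D ^ 4 then nuF D χ q.1 else 0) *
          (if q.2 ≤ D ^ 4 then upsF D χ q.2 else 0) *
          ψ ((q.1 * q.2 : ℕ) : ZMod p) * ((q.1 * q.2 : ℕ) : ℂ) ^ (-s) with hf
      have e1 : Ffun D χ ψ s * Gfun D χ ψ s =
          ∑ q ∈ Finset.Icc 1 (D ^ 4) ×ˢ Finset.Icc 1 (D ^ 4), f q := by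
        rw [Ffun, Gfun, Finset.sum_mul_sum]
        rw [← Finset.sum_product' (Finset.Icc 1 (D ^ 4)) (Finset.Icc 1 (D ^ 4))
          (fun l m => (nuF D χ l * ψ (l : ZMod p) * (l : ℂ) ^ (-s)) *
            (upsF D χ m * ψ (m : ZMod p) * (m : ℂ) ^ (-s)))]
        refine Finset.sum_congr rfl fun q hq => ?_
        simp only [Finset.mem_product, Finset.mem_Icc] at hq
        rw [hf]
        simp only [if_pos hq.1.2, if_pos hq.2.2]
        have hψ : ψ ((q.1 * q.2 : ℕ) : ZMod p) = ψ (q.1 : ZMod p) * ψ (q.2 : ZMod p) := by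
          push_cast
          exact map_mul ψ _ _
        have hpow : ((q.1 * q.2 : ℕ) : ℂ) ^ (-s) = (q.1 : ℂ) ^ (-s) * (q.2 : ℂ) ^ (-s) := by
          have h := Complex.mul_cpow_ofReal_nonneg (Nat.cast_nonneg q.1)
            (Nat.cast_nonneg q.2) (-s)
          push_cast at h ⊢
          exact h
        rw [hψ, hpow]
        ring
      have e2 : ∑ q ∈ Finset.Icc 1 (D ^ 4) ×ˢ Finset.Icc 1 (D ^ 4), f q =
          ∑ q ∈ (Finset.Icc 1 N ×ˢ Finset.Icc 1 N).filter (fun q => q.1 * q.2 ≤ N), f q := by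
        apply Finset.sum_subset
        · intro q hq
          simp only [Finset.mem_product, Finset.mem_Icc] at hq
          have hq1 : q.1 * q.2 ≤ N := by
            rw [hN, show D ^ 8 = D ^ 4 * D ^ 4 by ring]
            exact Nat.mul_le_mul hq.1.2 hq.2.2
          have hMlN : D ^ 4 ≤ N := le_of_lt hMN
          simp only [Finset.mem_filter, Finset.mem_product, Finset.mem_Icc]
          exact ⟨⟨⟨hq.1.1, le_trans hq.1.2 hMlN⟩, ⟨hq.2.1, le_trans hq.2.2 hMlN⟩⟩, hq1⟩
        · intro q hq hnq
          simp only [Finset.mem_filter, Finset.mem_product, Finset.mem_Icc] at hq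
          simp only [Finset.mem_product, Finset.mem_Icc] at hnq
          rw [hf]
          rcases le_or_gt q.1 (D ^ 4) with h1 | h1
          · rcases le_or_gt q.2 (D ^ 4) with h2 | h2
            · exact absurd ⟨⟨hq.1.1.1, h1⟩, hq.1.2.1, h2⟩ hnq
            · simp [Nat.not_le.mpr h2]
          · simp [Nat.not_le.mpr h1]
      rw [e1, e2, ← sum_conv N f]
      refine Finset.sum_congr rfl fun n hn => ?_
      have hn0 : n ≠ 0 := by
        simp only [Finset.mem_Icc] at hn
        omega
      have step : ∀ q ∈ n.divisorsAntidiagonal, f q =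
          (if q.1 ≤ D ^ 4 ∧ q.2 ≤ D ^ 4 then nuF D χ q.1 * upsF D χ q.2 else 0) *
            (ψ (n : ZMod p) * (n : ℂ) ^ (-s)) := by
        intro q hq
        obtain ⟨hq1, -⟩ := Nat.mem_divisorsAntidiagonal.mp hq
        rw [hf]
        simp only [hq1]
        by_cases ha : q.1 ≤ D ^ 4 <;> by_cases hb : q.2 ≤ D ^ 4 <;>
          simp [ha, hb] <;> ring
      rw [Finset.sum_congr rfl step, ← Finset.sum_mul]
      have hdiv : (∑ q ∈ n.divisorsAntidiagonal,
          if q.1 ≤ D ^ 4 ∧ q.2 ≤ D ^ 4 then nuF D χ q.1 * upsF D χ q.2 else 0) =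
          sigF D χ n := by
        rw [Nat.sum_divisorsAntidiagonal
          (f := fun a b => if a ≤ D ^ 4 ∧ b ≤ D ^ 4 then nuF D χ a * upsF D χ b else 0)]
        rfl
      rw [hdiv]
      ring
    have hsplit : ∑ n ∈ Finset.Icc 1 N, sigF D χ n * ψ (n : ZMod p) * (n : ℂ) ^ (-s) =
        (∑ n ∈ Finset.Ioc 0 M, sigF D χ n * ψ (n : ZMod p) * (n : ℂ) ^ (-s)) +
          ∑ n ∈ Finset.Ioc M N, sigF D χ n * ψ (n : ZMod p) * (n : ℂ) ^ (-s) := by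
      rw [show Finset.Icc 1 N = Finset.Ioc 0 N from (Finset.Icc_add_one_left_eq_Ioc 0 N)]
      rw [Finset.sum_Ioc_consecutive _ (Nat.zero_le M) (le_of_lt hMN)]
    have hone : (∑ n ∈ Finset.Ioc 0 M, sigF D χ n * ψ (n : ZMod p) * (n : ℂ) ^ (-s)) = 1 := by
      rw [show Finset.Ioc 0 M = Finset.Icc 1 M from (Finset.Icc_add_one_left_eq_Ioc 0 M).symm]
      rw [Finset.sum_eq_single 1]
      · have h1 : sigF D χ 1 = 1 := by
          rw [sigF_eq D χ one_ne_zero (le_trans (by norm_num) hM1)]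
          simp
        rw [h1]
        simp
      · intro m hm hm1
        simp only [Finset.mem_Icc] at hm
        have : sigF D χ m = 0 := by
          rw [sigF_eq D χ (by omega) hm.2]
          simp [hm1]
        rw [this]
        simp
      · intro h
        exact absurd (Finset.mem_Icc.mpr ⟨le_refl 1, hM1⟩) h
    rw [hprod, hsplit, hone]
    ring
  -- Step B : switch to s0-normalized terms
  have hterm : ∀ n ∈ Finset.Ioc M N, sigF D χ n * ψ (n : ZMod p) * (n : ℂ) ^ (-s) =
      c n * bb n := by
    intro n hn
    have hn0 : n ≠ 0 := by
      simp only [Finset.mem_Ioc] at hn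
      omega
    have hne : (n : ℂ) ≠ 0 := Nat.cast_ne_zero.mpr hn0
    have hadd : (n : ℂ) ^ (-s) = (n : ℂ) ^ (-s0 D) * (n : ℂ) ^ w := by
      rw [← Complex.cpow_add _ _ hne]
      congr 1
      rw [hw]
      ring
    rw [hc, hbb, hadd]
    ring
  -- Abel summation
  have habel := abel_sum c bb M N (le_of_lt hMN)
  have hFG2 : Ffun D χ ψ s * Gfun D χ ψ s - 1 =
      (∑ k ∈ Finset.Ioc M N, c k) * bb N -
        ∑ n ∈ Finset.Ico M N, (∑ k ∈ Finset.Ioc M n, c k) * (bb (n + 1) - bb n) := by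
    rw [hFG, Finset.sum_congr rfl hterm, habel]
  -- bounds on pieces
  have hNcast : ((N : ℕ) : ℝ) = (D : ℝ) ^ 8 := by
    rw [hN]; push_cast; ring
  have hbbN : ‖bb N‖ ≤ L := by
    rw [hbb]
    have h0 : 0 < N := by omega
    rw [Complex.norm_natCast_cpow_of_pos h0]
    have := hrpow ((N : ℕ) : ℝ) (by exact_mod_cast Nat.one_le_iff_ne_zero.mpr (by omega)) 
      (le_of_eq hNcast)
    exact this
  have hAN : ‖∑ k ∈ Finset.Ioc M N, c k‖ = ‖X4 D χ ψ ((D : ℝ) ^ 8)‖ := by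
    rw [← hNcast, hA N]
  -- derivative bound on bb increments
  have hΔ : ∀ n : ℕ, M ≤ n → n < N → ‖bb (n + 1) - bb n‖ ≤ ‖w‖ * L / n := by
    intro n hn1 hn2
    have hnR : (1:ℝ) ≤ (n:ℝ) := by exact_mod_cast le_trans hM1 hn1
    have hn0 : (0:ℝ) < (n:ℝ) := by linarith
    have hderiv : ∀ t ∈ Set.Icc (n:ℝ) ((n:ℝ) + 1),
        HasDerivWithinAt (fun t : ℝ => ((t : ℂ) ^ w)) (w * (t:ℂ) ^ (w - 1))
          (Set.Icc (n:ℝ) ((n:ℝ) + 1)) t := by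
      intro t ht
      have ht0 : (0:ℝ) < t := lt_of_lt_of_le hn0 ht.1
      have h := (hasDerivAt_id ((t : ℝ) : ℂ)).cpow_const (c := w)
        (Complex.ofReal_mem_slitPlane.mpr ht0)
      have h2 := h.comp_ofReal
      simpa using h2.hasDerivWithinAt
    have hbound : ∀ t ∈ Set.Ico (n:ℝ) ((n:ℝ) + 1), ‖w * (t:ℂ) ^ (w - 1)‖ ≤ ‖w‖ * L / n := by
      intro t ht
      have ht1 : (1:ℝ) ≤ t := le_trans hnR ht.1
      have ht0 : (0:ℝ) < t := by linarith
      rw [norm_mul]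
      have hnorm : ‖(t:ℂ) ^ (w - 1)‖ = t ^ (w - 1).re := by
        rw [Complex.norm_cpow_eq_rpow_re_of_pos ht0]
      have hre : (w - 1).re = w.re - 1 := by simp
      rw [hnorm, hre, Real.rpow_sub ht0, Real.rpow_one]
      have htD : t ≤ (D:ℝ) ^ 8 := by
        have hle : (n:ℝ) + 1 ≤ ((N:ℕ):ℝ) := by
          have : n + 1 ≤ N := hn2
          exact_mod_cast this
        rw [hNcast] at hle
        linarith [ht.2]
      have h1 : t ^ w.re ≤ L := hrpow t ht1 htD
      have h2 : t ^ w.re / t ≤ L / (n:ℝ) := div_le_div₀ (le_of_lt hL0) h1 hn0 ht.1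
      calc ‖w‖ * (t ^ w.re / t) ≤ ‖w‖ * (L / n) := mul_le_mul_of_nonneg_left h2 hnormw0
        _ = ‖w‖ * L / n := by ring
    have hmvt := norm_image_sub_le_of_norm_deriv_le_segment' hderiv hbound
      ((n:ℝ) + 1) (Set.mem_Icc.mpr ⟨by linarith, le_refl _⟩)
    have hcast1 : (((n:ℝ) + 1 : ℝ) : ℂ) = ((n + 1 : ℕ) : ℂ) := by push_cast; ring
    rw [hbb]
    simp only [hcast1] at hmvt
    calc ‖((n + 1 : ℕ) : ℂ) ^ w - ((n:ℕ) : ℂ) ^ w‖ ≤ ‖w‖ * L / n * ((n:ℝ) + 1 - n) := hmvt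
      _ = ‖w‖ * L / n := by ring_nf
  -- integral facts per interval
  have hintfacts : ∀ n : ℕ, 1 ≤ n →
      (∫ x in (n:ℝ)..((n:ℝ) + 1), ‖X4 D χ ψ x‖ / x) =
        ‖∑ k ∈ Finset.Ioc M n, c k‖ * Real.log (((n:ℝ) + 1) / n) ∧
      IntervalIntegrable (fun x => ‖X4 D χ ψ x‖ / x) MeasureTheory.volume (n:ℝ) ((n:ℝ) + 1) := by
    intro n hn
    have hnR : (1:ℝ) ≤ (n:ℝ) := by exact_mod_cast hn
    have hn0 : (0:ℝ) < (n:ℝ) := by linarith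
    have hane : ∀ᵐ x : ℝ, x ≠ ((n:ℝ) + 1) := by
      have hsing : (MeasureTheory.volume : MeasureTheory.Measure ℝ) {((n:ℝ) + 1)} = 0 :=
        MeasureTheory.measure_singleton _
      rw [MeasureTheory.ae_iff]
      convert hsing using 2
      ext x
      simp
    have hae : ∀ᵐ x : ℝ, x ∈ Set.uIoc (n:ℝ) ((n:ℝ) + 1) →
        ‖X4 D χ ψ x‖ / x = ‖∑ k ∈ Finset.Ioc M n, c k‖ * (1 / x) := by
      filter_upwards [hane] with x hx hxI
      rw [Set.uIoc_of_le (by linarith : (n:ℝ) ≤ (n:ℝ) + 1)] at hxI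
      have hfl : ⌊x⌋₊ = n := by
        rw [Nat.floor_eq_iff (by linarith [hxI.1] : (0:ℝ) ≤ x)]
        exact ⟨le_of_lt hxI.1, lt_of_le_of_ne hxI.2 hx⟩
      have hX4 : X4 D χ ψ x = ∑ k ∈ Finset.Ioc M n, c k := by
        simp only [X4, hfl, hc, hM]
      rw [hX4, div_eq_mul_one_div]
    constructor
    · rw [intervalIntegral.integral_congr_ae hae, intervalIntegral.integral_const_mul]
      congr 1
      rw [integral_one_div]
      intro h0
      rw [Set.uIcc_of_le (by linarith : (n:ℝ) ≤ (n:ℝ) + 1)] at h0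
      have := h0.1
      linarith
    · have hbase : IntervalIntegrable (fun x : ℝ => ‖∑ k ∈ Finset.Ioc M n, c k‖ * (1 / x))
          MeasureTheory.volume (n:ℝ) ((n:ℝ) + 1) := by
        apply IntervalIntegrable.const_mul
        apply intervalIntegral.intervalIntegrable_one_div (f := fun x : ℝ => x)
        · intro x hx
          rw [Set.uIcc_of_le (by linarith : (n:ℝ) ≤ (n:ℝ) + 1)] at hx
          have := hx.1
          intro h0
          rw [h0] at this
          linarith
        · exact continuousOn_id
      refine hbase.congr_ae ?_
      refine ((MeasureTheory.ae_restrict_iff' measurableSet_uIoc).mpr ?_)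
      filter_upwards [hae] with x hx hxI
      exact (hx hxI).symm
  -- sum of integrals over adjacent intervals
  have hadj : (∑ n ∈ Finset.Ico M N, ∫ x in (n:ℝ)..((n:ℝ) + 1), ‖X4 D χ ψ x‖ / x) =
      ∫ x in ((D:ℝ) ^ 4)..((D:ℝ) ^ 8), ‖X4 D χ ψ x‖ / x := by
    have hMcast : ((M : ℕ) : ℝ) = (D : ℝ) ^ 4 := by rw [hM]; push_cast; ring
    rw [← hMcast, ← hNcast]
    rw [Finset.sum_Ico_eq_sum_range]
    have hsum := intervalIntegral.sum_integral_adjacent_intervals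
      (a := fun i : ℕ => ((M + i : ℕ) : ℝ)) (f := fun x => ‖X4 D χ ψ x‖ / x)
      (μ := MeasureTheory.volume) (n := N - M)
      (fun k _ => by
        have h := (hintfacts (M + k) (le_trans hM1 (Nat.le_add_right M k))).2
        simpa [Nat.cast_add, Nat.cast_one, add_assoc] using h)
    calc ∑ k ∈ Finset.range (N - M),
          ∫ x in ((M + k : ℕ):ℝ)..(((M + k : ℕ):ℝ) + 1), ‖X4 D χ ψ x‖ / x
        = ∑ k ∈ Finset.range (N - M),
          ∫ x in ((M + k : ℕ):ℝ)..((M + (k + 1) : ℕ):ℝ), ‖X4 D χ ψ x‖ / x := by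
          refine Finset.sum_congr rfl fun k _ => ?_
          congr 1
          push_cast
          ring
      _ = ∫ x in ((M + 0 : ℕ):ℝ)..((M + (N - M) : ℕ):ℝ), ‖X4 D χ ψ x‖ / x := hsum
      _ = ∫ x in ((M : ℕ):ℝ)..((N : ℕ):ℝ), ‖X4 D χ ψ x‖ / x := by
          have e1 : M + 0 = M := by omega
          have e2 : M + (N - M) = N := by omega
          rw [e1, e2]
  -- per-term estimate over Ico
  have hper : ∀ n ∈ Finset.Ico M N,
      ‖(∑ k ∈ Finset.Ioc M n, c k) * (bb (n + 1) - bb n)‖ ≤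
        (4 * L ^ 406) * ∫ x in (n:ℝ)..((n:ℝ) + 1), ‖X4 D χ ψ x‖ / x := by
    intro n hn
    simp only [Finset.mem_Ico] at hn
    have hn1 : 1 ≤ n := le_trans hM1 hn.1
    have hnR : (1:ℝ) ≤ (n:ℝ) := by exact_mod_cast hn1
    have hn0 : (0:ℝ) < (n:ℝ) := by linarith
    obtain ⟨hint1, -⟩ := hintfacts n hn1
    have hlog : 1 / (2 * (n:ℝ)) ≤ Real.log (((n:ℝ) + 1) / n) := by
      have h1 : Real.log ((n:ℝ) / ((n:ℝ) + 1)) ≤ (n:ℝ) / ((n:ℝ) + 1) - 1 :=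
        Real.log_le_sub_one_of_pos (by positivity)
      have h2 : Real.log (((n:ℝ) + 1) / n) = - Real.log ((n:ℝ) / ((n:ℝ) + 1)) := by
        rw [← Real.log_inv]
        congr 1
        field_simp
      have h3 : (n:ℝ) / ((n:ℝ) + 1) - 1 = - (1 / ((n:ℝ) + 1)) := by
        field_simp
        ring
      rw [h2]
      have h4 : 1 / ((n:ℝ) + 1) ≤ - Real.log ((n:ℝ) / ((n:ℝ) + 1)) := by
        rw [h3] at h1
        linarith
      have h5 : 1 / (2 * (n:ℝ)) ≤ 1 / ((n:ℝ) + 1) := by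
        apply div_le_div_of_nonneg_left (by norm_num) (by positivity)
        linarith
      linarith
    set An : ℝ := ‖∑ k ∈ Finset.Ioc M n, c k‖ with hAn
    have hAn0 : 0 ≤ An := norm_nonneg _
    have hΔn := hΔ n hn.1 hn.2
    have hstep1 : ‖(∑ k ∈ Finset.Ioc M n, c k) * (bb (n + 1) - bb n)‖ ≤ An * (‖w‖ * L / n) := by
      rw [norm_mul]
      exact mul_le_mul_of_nonneg_left hΔn hAn0
    have hstep2 : An * (‖w‖ * L / n) ≤ (4 * L ^ 406) * (An * (1 / (2 * (n:ℝ)))) := by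
      have hwL : ‖w‖ * L ≤ 2 * L ^ 406 := by
        calc ‖w‖ * L ≤ (2 * L ^ 405) * L := mul_le_mul_of_nonneg_right hnormw (le_of_lt hL0)
          _ = 2 * L ^ 406 := by ring
      have expand : An * (‖w‖ * L / n) = (‖w‖ * L) * (An / n) := by ring
      have expand2 : (4 * L ^ 406) * (An * (1 / (2 * (n:ℝ)))) = (2 * L ^ 406) * (An / n) := by
        field_simp
        ring
      rw [expand, expand2]
      apply mul_le_mul_of_nonneg_right hwL
      positivity
    have hstep3 : (4 * L ^ 406) * (An * (1 / (2 * (n:ℝ)))) ≤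
        (4 * L ^ 406) * ∫ x in (n:ℝ)..((n:ℝ) + 1), ‖X4 D χ ψ x‖ / x := by
      apply mul_le_mul_of_nonneg_left _ (by positivity)
      rw [hint1]
      exact mul_le_mul_of_nonneg_left hlog hAn0
    linarith
  -- integral nonneg on each interval; and total
  have hintnonneg : (0:ℝ) ≤ ∫ x in ((D:ℝ) ^ 4)..((D:ℝ) ^ 8), ‖X4 D χ ψ x‖ / x := by
    rw [← hadj]
    apply Finset.sum_nonneg
    intro n hn
    simp only [Finset.mem_Ico] at hn
    have hn1 : 1 ≤ n := le_trans hM1 hn.1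
    obtain ⟨hint1, -⟩ := hintfacts n hn1
    rw [hint1]
    apply mul_nonneg (norm_nonneg _)
    apply Real.log_nonneg
    rw [le_div_iff₀ (by positivity)]
    push_cast
    linarith [Nat.one_le_iff_ne_zero.mp hn1]
  -- final assembly
  set t1 : ℝ := ‖X4 D χ ψ ((D : ℝ) ^ 8)‖ with ht1
  set t2 : ℝ := ∫ x in ((D:ℝ) ^ 4)..((D:ℝ) ^ 8), ‖X4 D χ ψ x‖ / x with ht2
  have ht1nn : 0 ≤ t1 := norm_nonneg _
  have hIneq3' : t1 + t2 < L ^ (-633 : ℤ) := by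
    have := hineq3
    rw [Ineq3] at this
    exact this
  have hmain : ‖Ffun D χ ψ s * Gfun D χ ψ s - 1‖ ≤ t1 * L + (4 * L ^ 406) * t2 := by
    rw [hFG2]
    calc ‖(∑ k ∈ Finset.Ioc M N, c k) * bb N -
          ∑ n ∈ Finset.Ico M N, (∑ k ∈ Finset.Ioc M n, c k) * (bb (n + 1) - bb n)‖
        ≤ ‖(∑ k ∈ Finset.Ioc M N, c k) * bb N‖ +
          ‖∑ n ∈ Finset.Ico M N, (∑ k ∈ Finset.Ioc M n, c k) * (bb (n + 1) - bb n)‖ :=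
          norm_sub_le _ _
      _ ≤ ‖∑ k ∈ Finset.Ioc M N, c k‖ * ‖bb N‖ +
          ∑ n ∈ Finset.Ico M N, ‖(∑ k ∈ Finset.Ioc M n, c k) * (bb (n + 1) - bb n)‖ := by
          rw [norm_mul]
          exact add_le_add le_rfl (norm_sum_le _ _)
      _ ≤ t1 * L + ∑ n ∈ Finset.Ico M N,
            (4 * L ^ 406) * ∫ x in (n:ℝ)..((n:ℝ) + 1), ‖X4 D χ ψ x‖ / x := by
          apply add_le_add
          · rw [hAN, ht1]
            exact mul_le_mul_of_nonneg_left hbbN (norm_nonneg _)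
          · exact Finset.sum_le_sum hper
      _ = t1 * L + (4 * L ^ 406) * t2 := by
          rw [← Finset.mul_sum, hadj, ht2]
  have hL406 : L ≤ 4 * L ^ 406 := by
    have h1 : L ^ 1 ≤ L ^ 406 := pow_le_pow_right₀ hL1 (by norm_num)
    have h2 : (0:ℝ) < L ^ 406 := by positivity
    nlinarith
  have hfinal : t1 * L + (4 * L ^ 406) * t2 ≤ (4 * L ^ 406) * (t1 + t2) := by
    nlinarith
  have hzpow : (L ^ (406:ℕ)) * L ^ (-633 : ℤ) = L ^ (-227 : ℤ) := by
    rw [← zpow_natCast L 406, ← zpow_add₀ hLne]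
    norm_num
  have hlast : (4 * L ^ 406) * (t1 + t2) ≤ 4 * L ^ (-227 : ℤ) := by
    have h1 : (4 * L ^ 406) * (t1 + t2) ≤ (4 * L ^ 406) * L ^ (-633 : ℤ) := by
      apply mul_le_mul_of_nonneg_left (le_of_lt hIneq3') (by positivity)
    calc (4 * L ^ 406) * (t1 + t2) ≤ (4 * L ^ 406) * L ^ (-633 : ℤ) := h1
      _ = 4 * ((L ^ (406:ℕ)) * L ^ (-633 : ℤ)) := by ring
      _ = 4 * L ^ (-227 : ℤ) := by rw [hzpow]
  linarith
end
end
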